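/- arXiv:1808.01515 — 4 statements merged into one kernel-verified Lean document; each statement's English description precedes it below -/
import Mathlib

section
/- Under the same assumptions (measure-preserving ergodic C¹ flow with generator V on L²(μ), and a C¹ symmetric positive-definite kernel k with RKHS H, integral operator K, and K* the L²(μ)-inclusion of H), the range of K* lies in D(V), the operator VK* : H → L²(μ) is bounded, and W = K V K* : H → H is a well-defined Hilbert–Schmidt, skew-adjoint, real operator satisfying Wf = ∫ k̃'(·,y) f(y) dμ(y), where k̃'(x,y) = −k'(y,x) and k'(x,y) = (V k(·,y))(x). -/
open MeasureTheory Filter Topology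

universe u

set_option maxHeartbeats 1000000

/-- Compactification in RKHS.  With a measure-preserving ergodic `C¹` flow with
skew-adjoint Koopman generator `V` on `L²(μ)` and a `C¹` symmetric positive-definite
kernel `k` with RKHS `H_K` (encoded via a `C¹` feature map `φf` with derivative `φd`
along the flow, and `k(x,y) = ⟪φf(x), φf(y)⟫`), integral operator `K : L²(μ) → H_K` and
`K* = Kst` the `L²(μ)`-inclusion of `H_K` (the adjoint of `K`): the range of `K*` lies in
`D(V)`, `V K* : H_K → L²(μ)` is bounded, and `W = K V K* : H_K → H_K` is a well-defined
Hilbert–Schmidt skew-adjoint operator satisfying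
`(W h)(x) = ∫ k̃'(x,y) h(y) dμ(y)` with `k̃'(x,y) = −k'(y,x)`,
`k'(x,y) = (V k(·,y))(x)`.  (Over `ℝ`, `W` is automatically a real operator.) -/
theorem stmt5 {α : Type u} [MeasurableSpace α] [MetricSpace α] [BorelSpace α]
    (μ : Measure α) [IsProbabilityMeasure μ]
    (X : Set α) (hXc : IsCompact X) (hXfull : μ Xᶜ = 0)
    (Φ : ℝ → α → α)
    (hΦ0 : ∀ x, Φ 0 x = x)
    (hΦgrp : ∀ s t x, Φ s (Φ t x) = Φ (s + t) x)
    (hΦcont : Continuous fun p : ℝ × α => Φ p.1 p.2)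
    (hΦmp : ∀ t, MeasurePreserving (Φ t) μ μ)
    (k k' : α → α → ℝ)
    (hksymm : ∀ x y, k x y = k y x)
    (hkC : Continuous fun p : α × α => k p.1 p.2)
    (hk'C : Continuous fun p : α × α => k' p.1 p.2)
    (hk' : ∀ x y, HasDerivAt (fun t => k (Φ t x) y) (k' x y) 0)
    (Koop : ℝ → Lp ℝ 2 μ →L[ℝ] Lp ℝ 2 μ)
    (hKoop : ∀ t (f : Lp ℝ 2 μ), ∀ᵐ x ∂μ, (Koop t f) x = f (Φ t x))
    (V : Lp ℝ 2 μ →ₗ.[ℝ] Lp ℝ 2 μ)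
    (hVgen : ∀ f (hf : f ∈ V.domain),
      Tendsto (fun t : ℝ => t⁻¹ • (Koop t f - f)) (𝓝[≠] (0 : ℝ)) (𝓝 (V ⟨f, hf⟩)))
    (hVdom : ∀ f g : Lp ℝ 2 μ,
      Tendsto (fun t : ℝ => t⁻¹ • (Koop t f - f)) (𝓝[≠] (0 : ℝ)) (𝓝 g) → f ∈ V.domain)
    -- the RKHS of `k`, encoded by its feature map:
    {HK : Type u} [NormedAddCommGroup HK] [InnerProductSpace ℝ HK] [CompleteSpace HK]
    (φf φd : α → HK) (hφc : Continuous φf) (hφdc : Continuous φd)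
    (hφk : ∀ x y, (inner ℝ (φf x) (φf y) : ℝ) = k x y)
    (hφd : ∀ x, HasDerivAt (fun t => φf (Φ t x)) (φd x) 0)
    (K : Lp ℝ 2 μ →L[ℝ] HK) (Kst : HK →L[ℝ] Lp ℝ 2 μ)
    (hadj : ContinuousLinearMap.adjoint K = Kst)
    (hKst : ∀ h : HK, ∀ᵐ x ∂μ, (Kst h) x = (inner ℝ (φf x) h : ℝ)) :
    (∀ h : HK, Kst h ∈ V.domain) ∧
    (∃ C : ℝ, 0 ≤ C ∧ ∀ h (hh : Kst h ∈ V.domain), ‖V ⟨Kst h, hh⟩‖ ≤ C * ‖h‖) ∧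
    ∃ W : HK →L[ℝ] HK,
      (∀ h (hh : Kst h ∈ V.domain), W h = K (V ⟨Kst h, hh⟩)) ∧
      ContinuousLinearMap.adjoint W = -W ∧
      (∀ {ι : Type u} (b : HilbertBasis ι ℝ HK), Summable fun i => ‖W (b i)‖ ^ 2) ∧
      (∀ h : HK, ∀ᵐ x ∂μ,
        (Kst (W h)) x = ∫ y, (-(k' y x)) * (inner ℝ (φf y) h : ℝ) ∂μ) := by
  classical
  have hXmeas : MeasurableSet X := hXc.isClosed.measurableSet
  have hXae : ∀ᵐ x ∂μ, x ∈ X := by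
    rw [MeasureTheory.ae_iff]
    exact hXfull
  have hΦcx : ∀ x : α, Continuous fun t : ℝ => Φ t x := fun x =>
    hΦcont.comp (continuous_id.prodMk continuous_const)
  have hΦct : ∀ t : ℝ, Continuous fun x => Φ t x := fun t =>
    hΦcont.comp (continuous_const.prodMk continuous_id)
  -- a.e. every orbit stays in X
  have horb : ∀ᵐ x ∂μ, ∀ s : ℝ, Φ s x ∈ X := by
    have hq : ∀ᵐ x ∂μ, ∀ q : ℚ, Φ (q : ℝ) x ∈ X := by
      rw [MeasureTheory.ae_all_iff]
      intro q
      have h0 : μ ((Φ (q : ℝ)) ⁻¹' Xᶜ) = 0 := by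
        rw [(hΦmp (q : ℝ)).measure_preimage hXmeas.compl.nullMeasurableSet]
        exact hXfull
      rw [MeasureTheory.ae_iff]
      exact h0
    filter_upwards [hq] with x hx s
    have hclosed : IsClosed {t : ℝ | Φ t x ∈ X} := hXc.isClosed.preimage (hΦcx x)
    have hsub : Set.range ((↑) : ℚ → ℝ) ⊆ {t : ℝ | Φ t x ∈ X} := by
      rintro _ ⟨q, rfl⟩; exact hx q
    have huniv : (Set.univ : Set ℝ) ⊆ {t : ℝ | Φ t x ∈ X} := by
      rw [← (Rat.denseRange_cast (𝕜 := ℝ)).closure_eq]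
      exact hclosed.closure_subset_iff.mpr hsub
    exact huniv (Set.mem_univ s)
  obtain ⟨M2', hM2'⟩ := hXc.exists_bound_of_continuousOn hφdc.continuousOn
  set M2 : ℝ := max M2' 0 with hM2def
  have hM2nn : 0 ≤ M2 := le_max_right _ _
  have hM2 : ∀ y ∈ X, ‖φd y‖ ≤ M2 := fun y hy => (hM2' y hy).trans (le_max_left _ _)
  have hub : ∀ (h : HK) (y : α), y ∈ X → |(inner ℝ (φd y) h : ℝ)| ≤ M2 * ‖h‖ := by
    intro h y hy
    calc |(inner ℝ (φd y) h : ℝ)| ≤ ‖φd y‖ * ‖h‖ := abs_real_inner_le_norm _ _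
      _ ≤ M2 * ‖h‖ := by
        exact mul_le_mul_of_nonneg_right (hM2 y hy) (norm_nonneg _)
  have hmemd : ∀ h : HK, MemLp (fun x => (inner ℝ (φd x) h : ℝ)) 2 μ := by
    intro h
    refine MemLp.of_bound (hφdc.inner continuous_const).aestronglyMeasurable (M2 * ‖h‖) ?_
    filter_upwards [hXae] with x hx
    simpa [Real.norm_eq_abs] using hub h x hx
  set Af : HK → Lp ℝ 2 μ := fun h => (hmemd h).toLp _ with hAfdef
  have hAcoe : ∀ h : HK, (Af h : α → ℝ) =ᵐ[μ] fun x => (inner ℝ (φd x) h : ℝ) := fun h =>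
    (hmemd h).coeFn_toLp
  have hAfnormsq : ∀ h : HK, ‖Af h‖ ^ 2 = ∫ x, (inner ℝ (φd x) h : ℝ) ^ 2 ∂μ := by
    intro h
    rw [← real_inner_self_eq_norm_sq, MeasureTheory.L2.inner_def]
    refine integral_congr_ae ?_
    filter_upwards [hAcoe h] with x hx
    simp [hx, RCLike.inner_apply, conj_trivial, sq]
  have hAfle : ∀ h : HK, ‖Af h‖ ≤ M2 * ‖h‖ := by
    intro h
    have h1 : ‖Af h‖ ^ 2 ≤ (M2 * ‖h‖) ^ 2 := by
      rw [hAfnormsq]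
      calc ∫ x, (inner ℝ (φd x) h : ℝ) ^ 2 ∂μ ≤ ∫ _, (M2 * ‖h‖) ^ 2 ∂μ := by
            refine integral_mono_ae ((hmemd h).integrable_sq) (integrable_const _) ?_
            filter_upwards [hXae] with x hx
            have := hub h x hx
            calc (inner ℝ (φd x) h : ℝ) ^ 2 = |(inner ℝ (φd x) h : ℝ)| ^ 2 := (sq_abs _).symm
              _ ≤ (M2 * ‖h‖) ^ 2 := by
                  exact pow_le_pow_left₀ (abs_nonneg _) this 2
        _ = (M2 * ‖h‖) ^ 2 := by simp
    have := Real.sqrt_le_sqrt h1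
    rwa [Real.sqrt_sq (norm_nonneg _), Real.sqrt_sq (by positivity)] at this
  have hAadd : ∀ h₁ h₂ : HK, Af (h₁ + h₂) = Af h₁ + Af h₂ := by
    intro h₁ h₂
    have e1 : Af (h₁ + h₂) = ((hmemd h₁).add (hmemd h₂)).toLp _ :=
      MemLp.toLp_congr _ _ (by filter_upwards with x using inner_add_right _ _ _)
    rw [e1]
    exact MemLp.toLp_add _ _
  have hAsmul : ∀ (c : ℝ) (h : HK), Af (c • h) = c • Af h := by
    intro c h
    have e1 : Af (c • h) = ((hmemd h).const_smul c).toLp _ :=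
      MemLp.toLp_congr _ _
        (by filter_upwards with x using by simp [inner_smul_right, Pi.smul_apply, smul_eq_mul])
    rw [e1]
    exact MemLp.toLp_const_smul _ _
  set Aclm : HK →L[ℝ] Lp ℝ 2 μ :=
    LinearMap.mkContinuous
      { toFun := Af, map_add' := hAadd, map_smul' := hAsmul } M2 (fun h => hAfle h)
    with hAclmdef
  have hAclm : ∀ h : HK, Aclm h = Af h := fun _ => rfl
  -- derivative of t ↦ ⟪φf (Φ t x), h⟫ at any time s
  have hFd : ∀ (h : HK) (x : α) (s : ℝ),
      HasDerivAt (fun t => (inner ℝ (φf (Φ t x)) h : ℝ)) (inner ℝ (φd (Φ s x)) h : ℝ) s := by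
    intro h x s
    have h1 : HasDerivAt (fun t => (inner ℝ (φf (Φ t (Φ s x))) h : ℝ))
        (inner ℝ (φd (Φ s x)) h : ℝ) 0 := by
      have := (hφd (Φ s x)).inner (𝕜 := ℝ) (hasDerivAt_const (0 : ℝ) h)
      simpa using this
    have h1' : HasDerivAt (fun t => (inner ℝ (φf (Φ (t + s) x)) h : ℝ))
        (inner ℝ (φd (Φ s x)) h : ℝ) 0 := by
      simpa only [hΦgrp] using h1
    have hg' : HasDerivAt (fun t => (inner ℝ (φf (Φ (t + s) x)) h : ℝ))
        (inner ℝ (φd (Φ s x)) h : ℝ) (s - s) := by simpa using h1'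
    have h2 := hg'.comp_sub_const s s
    simpa [sub_add_cancel] using h2
  -- mean value estimate
  have hMVT : ∀ (h : HK) (x : α) (t : ℝ), t ≠ 0 → ∀ C : ℝ,
      (∀ s ∈ Set.uIcc (0 : ℝ) t,
        |(inner ℝ (φd (Φ s x)) h : ℝ) - (inner ℝ (φd x) h : ℝ)| ≤ C) →
      |t⁻¹ * ((inner ℝ (φf (Φ t x)) h : ℝ) - (inner ℝ (φf x) h : ℝ)) - (inner ℝ (φd x) h : ℝ)| ≤ C := by
    intro h x t ht C hC
    have hC0 : 0 ≤ C := le_trans (abs_nonneg _) (hC 0 (Set.left_mem_uIcc))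
    have hθ : ∀ s ∈ Set.uIcc (0 : ℝ) t,
        HasDerivWithinAt (fun s => (inner ℝ (φf (Φ s x)) h : ℝ) - s * (inner ℝ (φd x) h : ℝ))
          ((inner ℝ (φd (Φ s x)) h : ℝ) - (inner ℝ (φd x) h : ℝ)) (Set.uIcc (0 : ℝ) t) s :=
      fun s _ => ((hFd h x s).sub (hasDerivAt_mul_const _)).hasDerivWithinAt
    have hmv := Convex.norm_image_sub_le_of_norm_hasDerivWithin_le hθ
      (fun s hs => by simpa [Real.norm_eq_abs] using hC s hs) (convex_uIcc _ _)
      Set.left_mem_uIcc Set.right_mem_uIcc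
    have key : |(inner ℝ (φf (Φ t x)) h : ℝ) - t * (inner ℝ (φd x) h : ℝ)
        - (inner ℝ (φf x) h : ℝ)| ≤ C * |t| := by
      simpa [hΦ0, Real.norm_eq_abs] using hmv
    have heq : t⁻¹ * ((inner ℝ (φf (Φ t x)) h : ℝ) - (inner ℝ (φf x) h : ℝ))
        - (inner ℝ (φd x) h : ℝ)
        = t⁻¹ * ((inner ℝ (φf (Φ t x)) h : ℝ) - t * (inner ℝ (φd x) h : ℝ)
            - (inner ℝ (φf x) h : ℝ)) := by
      field_simp
      ring
    rw [heq, abs_mul, abs_inv]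
    calc |t|⁻¹ * |(inner ℝ (φf (Φ t x)) h : ℝ) - t * (inner ℝ (φd x) h : ℝ)
        - (inner ℝ (φf x) h : ℝ)| ≤ |t|⁻¹ * (C * |t|) := by
          exact mul_le_mul_of_nonneg_left key (by positivity)
      _ = C := by
          field_simp
  -- uniform bound
  have hCbd : ∀ (h : HK) (x : α), (∀ s : ℝ, Φ s x ∈ X) → ∀ t : ℝ,
      |t⁻¹ * ((inner ℝ (φf (Φ t x)) h : ℝ) - (inner ℝ (φf x) h : ℝ)) - (inner ℝ (φd x) h : ℝ)|
        ≤ 2 * (M2 * ‖h‖) := by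
    intro h x hx t
    have hxX : x ∈ X := by simpa [hΦ0] using hx 0
    by_cases ht : t = 0
    · subst ht
      have := hub h x hxX
      simp only [inv_zero, zero_mul, zero_sub, abs_neg]
      linarith [mul_nonneg hM2nn (norm_nonneg h)]
    · refine hMVT h x t ht _ ?_
      intro s _
      have h1 := hub h (Φ s x) (hx s)
      have h2 := hub h x hxX
      calc |(inner ℝ (φd (Φ s x)) h : ℝ) - (inner ℝ (φd x) h : ℝ)|
          ≤ |(inner ℝ (φd (Φ s x)) h : ℝ)| + |(inner ℝ (φd x) h : ℝ)| := abs_sub _ _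
        _ ≤ 2 * (M2 * ‖h‖) := by linarith
  -- pointwise convergence
  have habsle : ∀ t s : ℝ, s ∈ Set.uIcc (0 : ℝ) t → |s| ≤ |t| := by
    intro t s hs
    rcases Set.mem_uIcc.mp hs with ⟨h1, h2⟩ | ⟨h1, h2⟩ <;>
      · rw [abs_le]
        constructor <;> [linarith [neg_abs_le t, le_abs_self t]; linarith [neg_abs_le t, le_abs_self t]]
  have hptw : ∀ (h : HK) (x : α), (∀ s : ℝ, Φ s x ∈ X) →
      Tendsto (fun t : ℝ =>
          t⁻¹ * ((inner ℝ (φf (Φ t x)) h : ℝ) - (inner ℝ (φf x) h : ℝ)) - (inner ℝ (φd x) h : ℝ))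
        (𝓝[≠] (0 : ℝ)) (𝓝 0) := by
    intro h x hx
    rw [Metric.tendsto_nhdsWithin_nhds]
    intro ε hε
    have hcont : ContinuousAt (fun s : ℝ => (inner ℝ (φd (Φ s x)) h : ℝ)) 0 :=
      ((hφdc.inner continuous_const).comp (hΦcx x)).continuousAt
    rcases Metric.continuousAt_iff.mp hcont (ε / 2) (by positivity) with ⟨δ, hδ, hδ'⟩
    refine ⟨δ, hδ, ?_⟩
    intro t ht hdist
    have htne : t ≠ 0 := ht
    rw [Real.dist_eq, sub_zero] at hdist
    have hb := hMVT h x t htne (ε / 2) ?_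
    · rw [Real.dist_eq, sub_zero]
      linarith
    · intro s hs
      have hsd : dist s 0 < δ := by
        rw [Real.dist_eq, sub_zero]
        exact lt_of_le_of_lt (habsle t s hs) hdist
      have := hδ' hsd
      rw [Real.dist_eq] at this
      simp only [hΦ0] at this
      exact le_of_lt (lt_of_lt_of_le this (by linarith))
  have hAcoe' : ∀ h : HK, ((Aclm h : Lp ℝ 2 μ) : α → ℝ) =ᵐ[μ]
      fun x => (inner ℝ (φd x) h : ℝ) := fun h => hAcoe h
  -- a.e. representative of the difference quotient
  have hcoe : ∀ (h : HK) (t : ℝ),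
      ((t⁻¹ • (Koop t (Kst h) - Kst h) - Aclm h : Lp ℝ 2 μ) : α → ℝ) =ᵐ[μ]
        fun x => t⁻¹ * ((inner ℝ (φf (Φ t x)) h : ℝ) - (inner ℝ (φf x) h : ℝ))
          - (inner ℝ (φd x) h : ℝ) := by
    intro h t
    have h6 : (fun x => (Kst h : α → ℝ) (Φ t x)) =ᵐ[μ]
        fun x => (inner ℝ (φf (Φ t x)) h : ℝ) :=
      (hΦmp t).quasiMeasurePreserving.ae_eq_comp (hKst h)
    filter_upwards [Lp.coeFn_sub (t⁻¹ • (Koop t (Kst h) - Kst h)) (Aclm h),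
      Lp.coeFn_smul (t⁻¹ : ℝ) (Koop t (Kst h) - Kst h),
      Lp.coeFn_sub (Koop t (Kst h)) (Kst h), hKoop t (Kst h), h6, hKst h,
      hAcoe' h] with x e1 e2 e3 e4 e6 e5 e7
    rw [e1, Pi.sub_apply, e2, Pi.smul_apply, e3, Pi.sub_apply, e4, e6, e5, e7,
      smul_eq_mul]
  -- norm formula
  have hnorm : ∀ (h : HK) (t : ℝ),
      ‖t⁻¹ • (Koop t (Kst h) - Kst h) - Aclm h‖
        = Real.sqrt (∫ x, (t⁻¹ * ((inner ℝ (φf (Φ t x)) h : ℝ) - (inner ℝ (φf x) h : ℝ))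
            - (inner ℝ (φd x) h : ℝ)) ^ 2 ∂μ) := by
    intro h t
    rw [← Real.sqrt_sq (norm_nonneg (t⁻¹ • (Koop t (Kst h) - Kst h) - Aclm h))]
    congr 1
    rw [← real_inner_self_eq_norm_sq, MeasureTheory.L2.inner_def]
    refine integral_congr_ae ?_
    filter_upwards [hcoe h t] with x hx
    rw [RCLike.inner_apply, conj_trivial, hx, sq]
  -- main convergence statement
  have hconv : ∀ h : HK, Tendsto (fun t : ℝ => t⁻¹ • (Koop t (Kst h) - Kst h))
      (𝓝[≠] (0 : ℝ)) (𝓝 (Aclm h)) := by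
    intro h
    rw [tendsto_iff_seq_tendsto]
    intro ts hts
    rw [tendsto_iff_norm_sub_tendsto_zero]
    have hmeas : ∀ t : ℝ, Continuous fun x =>
        t⁻¹ * ((inner ℝ (φf (Φ t x)) h : ℝ) - (inner ℝ (φf x) h : ℝ)) - (inner ℝ (φd x) h : ℝ) := by
      intro t
      exact (continuous_const.mul (((hφc.inner continuous_const).comp (hΦct t)).sub
        (hφc.inner continuous_const))).sub (hφdc.inner continuous_const)
    have key : Tendsto (fun n => ∫ x,
        ((ts n)⁻¹ * ((inner ℝ (φf (Φ (ts n) x)) h : ℝ) - (inner ℝ (φf x) h : ℝ))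
          - (inner ℝ (φd x) h : ℝ)) ^ 2 ∂μ) atTop (𝓝 0) := by
      have hdct := tendsto_integral_of_dominated_convergence (μ := μ)
        (F := fun n x => ((ts n)⁻¹ * ((inner ℝ (φf (Φ (ts n) x)) h : ℝ)
          - (inner ℝ (φf x) h : ℝ)) - (inner ℝ (φd x) h : ℝ)) ^ 2)
        (f := fun _ => (0 : ℝ)) (bound := fun _ => (2 * (M2 * ‖h‖)) ^ 2)
        (fun n => ((hmeas (ts n)).pow 2).aestronglyMeasurable)
        (integrable_const _)
        (by
          intro n
          filter_upwards [horb] with x hx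
          have hb := hCbd h x hx (ts n)
          rw [Real.norm_eq_abs, abs_pow]
          exact pow_le_pow_left₀ (abs_nonneg _) hb 2)
        (by
          filter_upwards [horb] with x hx
          have h1 := (hptw h x hx).comp hts
          have h2 := h1.pow 2
          simpa using h2)
      simpa using hdct
    have hsq : Tendsto (fun n => Real.sqrt (∫ x,
        ((ts n)⁻¹ * ((inner ℝ (φf (Φ (ts n) x)) h : ℝ) - (inner ℝ (φf x) h : ℝ))
          - (inner ℝ (φd x) h : ℝ)) ^ 2 ∂μ)) atTop (𝓝 0) := by
      have := (Real.continuous_sqrt.tendsto 0).comp key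
      rw [Real.sqrt_zero] at this
      exact this
    exact hsq.congr fun n => (hnorm h (ts n)).symm
  have hdom : ∀ h : HK, Kst h ∈ V.domain := fun h => hVdom _ _ (hconv h)
  have hVeq : ∀ (h : HK) (hh : Kst h ∈ V.domain), V ⟨Kst h, hh⟩ = Aclm h := fun h hh =>
    tendsto_nhds_unique (hVgen _ hh) (hconv h)
  -- the flow maps are measurable embeddings
  have hemb : ∀ t : ℝ, MeasurableEmbedding (Φ t) := by
    intro t
    exact Homeomorph.measurableEmbedding
      { toFun := Φ t
        invFun := Φ (-t)
        left_inv := fun x => by rw [hΦgrp]; simp [hΦ0]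
        right_inv := fun x => by rw [hΦgrp]; simp [hΦ0]
        continuous_toFun := hΦct t
        continuous_invFun := hΦct (-t) }
  -- Koopman operators preserve the inner product
  have hinv : ∀ (t : ℝ) (a b : Lp ℝ 2 μ),
      (inner ℝ (Koop t a) (Koop t b) : ℝ) = inner ℝ a b := by
    intro t a b
    rw [MeasureTheory.L2.inner_def, MeasureTheory.L2.inner_def]
    have hint : ∫ x, (inner ℝ ((Koop t a) x) ((Koop t b) x) : ℝ) ∂μ
        = ∫ x, (fun y => (inner ℝ (a y) (b y) : ℝ)) (Φ t x) ∂μ := by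
      refine integral_congr_ae ?_
      filter_upwards [hKoop t a, hKoop t b] with x h1 h2
      simp only [RCLike.inner_apply, conj_trivial, h1, h2]
    rw [hint]
    exact (hΦmp t).integral_comp (hemb t) (fun y => (inner ℝ (a y) (b y) : ℝ))
  -- skew-symmetry of the generator
  have hskew : ∀ (f g : Lp ℝ 2 μ) (hf : f ∈ V.domain) (hg : g ∈ V.domain),
      (inner ℝ (V ⟨f, hf⟩) g : ℝ) = -(inner ℝ f (V ⟨g, hg⟩) : ℝ) := by
    intro f g hf hg
    have hKg : Tendsto (fun t : ℝ => Koop t g) (𝓝[≠] (0 : ℝ)) (𝓝 g) := by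
      have h1 : Tendsto (fun t : ℝ => t • (t⁻¹ • (Koop t g - g)) + g) (𝓝[≠] (0 : ℝ))
          (𝓝 ((0 : ℝ) • (V ⟨g, hg⟩) + g)) :=
        ((tendsto_id.mono_left nhdsWithin_le_nhds).smul (hVgen g hg)).add tendsto_const_nhds
      rw [zero_smul, zero_add] at h1
      refine h1.congr' ?_
      filter_upwards [self_mem_nhdsWithin] with t ht
      have htne : (t : ℝ) ≠ 0 := ht
      rw [smul_smul, mul_inv_cancel₀ htne, one_smul, sub_add_cancel]
    have hzero : Tendsto (fun t : ℝ => (inner ℝ (t⁻¹ • (Koop t f - f)) (Koop t g) : ℝ)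
        + (inner ℝ f (t⁻¹ • (Koop t g - g)) : ℝ)) (𝓝[≠] (0 : ℝ))
        (𝓝 ((inner ℝ (V ⟨f, hf⟩) g : ℝ) + (inner ℝ f (V ⟨g, hg⟩) : ℝ))) :=
      ((hVgen f hf).inner hKg).add (tendsto_const_nhds.inner (hVgen g hg))
    have heq : ∀ᶠ t : ℝ in 𝓝[≠] (0 : ℝ),
        (inner ℝ (t⁻¹ • (Koop t f - f)) (Koop t g) : ℝ)
          + (inner ℝ f (t⁻¹ • (Koop t g - g)) : ℝ) = 0 := by
      filter_upwards [self_mem_nhdsWithin] with t ht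
      have htne : (t : ℝ) ≠ 0 := ht
      rw [real_inner_smul_left, real_inner_smul_right, inner_sub_left, inner_sub_right,
        hinv t f g]
      ring
    have hzero' : Tendsto (fun _ : ℝ => (0 : ℝ)) (𝓝[≠] (0 : ℝ))
        (𝓝 ((inner ℝ (V ⟨f, hf⟩) g : ℝ) + (inner ℝ f (V ⟨g, hg⟩) : ℝ))) :=
      hzero.congr' (heq.mono fun t ht => ht)
    have h0 := tendsto_nhds_unique hzero' tendsto_const_nhds
    linarith
  -- identification of k'
  have hk'eq : ∀ y x : α, k' y x = (inner ℝ (φd y) (φf x) : ℝ) := by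
    intro y x
    have h2 : HasDerivAt (fun t => (inner ℝ (φf (Φ t y)) (φf x) : ℝ))
        (inner ℝ (φd y) (φf x) : ℝ) 0 := by
      have := (hφd y).inner (𝕜 := ℝ) (hasDerivAt_const (0 : ℝ) (φf x))
      simpa using this
    have h1 : HasDerivAt (fun t => k (Φ t y) x) (inner ℝ (φd y) (φf x) : ℝ) 0 := by
      simpa only [hφk] using h2
    exact (hk' y x).unique h1
  -- adjoint relation
  have hKinner : ∀ (g : HK) (u : Lp ℝ 2 μ),
      (inner ℝ g (K u) : ℝ) = (inner ℝ (Kst g) u : ℝ) := by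
    intro g u
    rw [← hadj]
    exact (ContinuousLinearMap.adjoint_inner_left K u g).symm
  -- the operator W
  set W : HK →L[ℝ] HK := K.comp Aclm with hWdef
  have hWapp : ∀ h : HK, W h = K (Aclm h) := fun _ => rfl
  -- key inner-product identity for W
  have hWinner : ∀ f g : HK, (inner ℝ f (W g) : ℝ) = -(inner ℝ (W f) g : ℝ) := by
    intro f g
    have h1 : (inner ℝ f (W g) : ℝ) = inner ℝ (Kst f) (Aclm g) := hKinner f (Aclm g)
    have h2 : (inner ℝ (W f) g : ℝ) = inner ℝ (Kst g) (Aclm f) := by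
      rw [real_inner_comm]
      exact hKinner g (Aclm f)
    rw [h1, h2, ← hVeq g (hdom g), ← hVeq f (hdom f)]
    have h3 := hskew (Kst f) (Kst g) (hdom f) (hdom g)
    have h4 : (inner ℝ (Kst f) (V ⟨Kst g, hdom g⟩) : ℝ)
        = -(inner ℝ (V ⟨Kst f, hdom f⟩) (Kst g) : ℝ) := by linarith
    rw [h4, real_inner_comm]
  refine ⟨hdom, ⟨M2, hM2nn, ?_⟩, W, ?_, ?_, ?_, ?_⟩
  · intro h hh
    rw [hVeq h hh]
    exact hAfle h
  · intro h hh
    rw [hVeq h hh]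
    rfl
  · -- skew-adjointness
    refine ContinuousLinearMap.ext fun f => ?_
    refine ext_inner_right ℝ fun g => ?_
    rw [ContinuousLinearMap.adjoint_inner_left, ContinuousLinearMap.neg_apply,
      inner_neg_left, hWinner f g]
  · -- Hilbert–Schmidt
    intro ι b
    have hφdsq_int : Integrable (fun x => ‖φd x‖ ^ 2) μ := by
      refine Integrable.mono' (integrable_const (M2 ^ 2))
        ((hφdc.norm.pow 2).aestronglyMeasurable) ?_
      filter_upwards [hXae] with x hx
      rw [Real.norm_eq_abs, abs_of_nonneg (by positivity)]
      exact pow_le_pow_left₀ (norm_nonneg _) (hM2 x hx) 2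
    have hAb : Summable fun i => ‖Aclm (b i)‖ ^ 2 := by
      refine summable_of_sum_le (c := ∫ x, ‖φd x‖ ^ 2 ∂μ) (fun i => sq_nonneg _) ?_
      intro s
      have h1 : ∑ i ∈ s, ‖Aclm (b i)‖ ^ 2
          = ∫ x, ∑ i ∈ s, (inner ℝ (φd x) (b i) : ℝ) ^ 2 ∂μ := by
        rw [integral_finset_sum s (fun i _ => (hmemd (b i)).integrable_sq)]
        exact Finset.sum_congr rfl fun i _ => hAfnormsq (b i)
      rw [h1]
      refine integral_mono (integrable_finset_sum s fun i _ => (hmemd (b i)).integrable_sq)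
        hφdsq_int ?_
      intro x
      have h2 := (b.orthonormal).sum_inner_products_le (φd x) (s := s)
      simpa [real_inner_comm, Real.norm_eq_abs, sq_abs] using h2
    have hKn : ‖K‖ = ‖Kst‖ := by
      rw [← hadj]
      exact (ContinuousLinearMap.adjoint.norm_map K).symm
    refine Summable.of_nonneg_of_le (fun i => sq_nonneg _)
      (fun i => ?_) (hAb.mul_left (‖Kst‖ ^ 2))
    have h1 : ‖W (b i)‖ ≤ ‖Kst‖ * ‖Aclm (b i)‖ := by
      rw [hWapp, ← hKn]
      exact K.le_opNorm _
    calc ‖W (b i)‖ ^ 2 ≤ (‖Kst‖ * ‖Aclm (b i)‖) ^ 2 :=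
          pow_le_pow_left₀ (norm_nonneg _) h1 2
      _ = ‖Kst‖ ^ 2 * ‖Aclm (b i)‖ ^ 2 := by ring
  · -- integral formula
    intro h
    filter_upwards [hKst (W h)] with x hx
    rw [hx]
    have h1 : (inner ℝ (φf x) (W h) : ℝ) = inner ℝ (Kst (φf x)) (Aclm h) := hKinner (φf x) (Aclm h)
    have h2 := hskew (Kst (φf x)) (Kst h) (hdom (φf x)) (hdom h)
    have h3 : (inner ℝ (Kst (φf x)) (V ⟨Kst h, hdom h⟩) : ℝ)
        = -(inner ℝ (V ⟨Kst (φf x), hdom (φf x)⟩) (Kst h) : ℝ) := by linarith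
    have h4 : (inner ℝ (Aclm (φf x)) (Kst h) : ℝ)
        = ∫ y, (k' y x) * (inner ℝ (φf y) h : ℝ) ∂μ := by
      rw [MeasureTheory.L2.inner_def]
      refine integral_congr_ae ?_
      filter_upwards [hAcoe' (φf x), hKst h] with y e1 e2
      rw [RCLike.inner_apply, conj_trivial, e1, e2, hk'eq y x, mul_comm]
    rw [h1, ← hVeq h (hdom h), h3, hVeq _ (hdom (φf x)), h4, ← integral_neg]
    refine integral_congr_ae (Eventually.of_forall fun y => ?_)
    ring
end

section
/- With the same assumptions (C¹ ergodic measure-preserving flow with generator V, C¹ symmetric positive-definite kernel with operators K, G = K*K, and polar decomposition K = U G^{1/2} with U a partial isometry): the operator G^{1/2} V G^{1/2} is densely defined and bounded, and it has a unique skew-adjoint extension Ṽ to a Hilbert–Schmidt real operator on L²(μ), given by Ṽ = U* W U where W = K V K*. In particular, if k is L²(μ)-strictly-positive, then Ṽ is unitarily equivalent to the restriction of W to the closure of the range of K. -/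
open MeasureTheory Filter Topology

universe u

set_option maxHeartbeats 2000000 in
/-- Skew-adjoint compactification.  With a measure-preserving ergodic `C¹` flow with
skew-adjoint Koopman generator `V` on `L²(μ)`, a `C¹` symmetric positive-definite kernel
`k` with RKHS `H_K` (feature map `φf`, flow derivative `φd`), integral operators
`K : L²(μ) → H_K`, `K* = Kst`, `G = K*K`, positive square root `G^{1/2} = sqrtG`, polar
decomposition `K = U G^{1/2}` with partial isometry `U = Uiso` (initial space the closure
of `ran G^{1/2}`), and `W = K V K*`:
the operator `G^{1/2} V G^{1/2}` is densely defined and bounded, and has a unique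
skew-adjoint extension `Ṽ` to a Hilbert–Schmidt operator on `L²(μ)`, given by
`Ṽ = U* W U`.  If moreover `k` is `L²(μ)`-strictly-positive (`G` injective), then `U` is
an isometry whose range is dense in `K̄ = closure(ran K)`, so that `Ṽ` is unitarily
equivalent to `W` restricted to `K̄`. -/
theorem stmt7 {α : Type u} [MeasurableSpace α] [MetricSpace α] [BorelSpace α]
    (μ : Measure α) [IsProbabilityMeasure μ]
    (X : Set α) (hXc : IsCompact X) (hXfull : μ Xᶜ = 0)
    (Φ : ℝ → α → α)
    (hΦ0 : ∀ x, Φ 0 x = x)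
    (hΦgrp : ∀ s t x, Φ s (Φ t x) = Φ (s + t) x)
    (hΦcont : Continuous fun p : ℝ × α => Φ p.1 p.2)
    (hΦmp : ∀ t, MeasurePreserving (Φ t) μ μ)
    (k k' : α → α → ℝ)
    (hksymm : ∀ x y, k x y = k y x)
    (hkC : Continuous fun p : α × α => k p.1 p.2)
    (hk'C : Continuous fun p : α × α => k' p.1 p.2)
    (hk' : ∀ x y, HasDerivAt (fun t => k (Φ t x) y) (k' x y) 0)
    (Koop : ℝ → Lp ℝ 2 μ →L[ℝ] Lp ℝ 2 μ)
    (hKoop : ∀ t (f : Lp ℝ 2 μ), ∀ᵐ x ∂μ, (Koop t f) x = f (Φ t x))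
    (V : Lp ℝ 2 μ →ₗ.[ℝ] Lp ℝ 2 μ)
    (hdense : Dense (V.domain : Set (Lp ℝ 2 μ)))
    (hVgen : ∀ f (hf : f ∈ V.domain),
      Tendsto (fun t : ℝ => t⁻¹ • (Koop t f - f)) (𝓝[≠] (0 : ℝ)) (𝓝 (V ⟨f, hf⟩)))
    (hVdom : ∀ f g : Lp ℝ 2 μ,
      Tendsto (fun t : ℝ => t⁻¹ • (Koop t f - f)) (𝓝[≠] (0 : ℝ)) (𝓝 g) → f ∈ V.domain)
    -- the RKHS of `k`, encoded by its feature map: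
    {HK : Type u} [NormedAddCommGroup HK] [InnerProductSpace ℝ HK] [CompleteSpace HK]
    (φf φd : α → HK) (hφc : Continuous φf) (hφdc : Continuous φd)
    (hφk : ∀ x y, (inner ℝ (φf x) (φf y) : ℝ) = k x y)
    (hφd : ∀ x, HasDerivAt (fun t => φf (Φ t x)) (φd x) 0)
    (K : Lp ℝ 2 μ →L[ℝ] HK) (Kst : HK →L[ℝ] Lp ℝ 2 μ)
    (hadj : ContinuousLinearMap.adjoint K = Kst)
    (hKst : ∀ h : HK, ∀ᵐ x ∂μ, (Kst h) x = (inner ℝ (φf x) h : ℝ))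
    (G : Lp ℝ 2 μ →L[ℝ] Lp ℝ 2 μ) (hGdef : G = Kst.comp K)
    -- the positive square root `G^{1/2}`:
    (sqrtG : Lp ℝ 2 μ →L[ℝ] Lp ℝ 2 μ)
    (hsq : sqrtG.comp sqrtG = G)
    (hsqsa : IsSelfAdjoint sqrtG)
    (hsqpos : ∀ f, 0 ≤ (inner ℝ f (sqrtG f) : ℝ))
    -- the partial isometry `U` of the polar decomposition `K = U G^{1/2}`:
    (Uiso : Lp ℝ 2 μ →L[ℝ] HK)
    (hpolar : K = Uiso.comp sqrtG)
    (hUcontr : ∀ f, ‖Uiso f‖ ≤ ‖f‖)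
    (hUinit : ∀ f, ‖Uiso (sqrtG f)‖ = ‖sqrtG f‖)
    (hUker : ∀ g, (∀ f, (inner ℝ g (sqrtG f) : ℝ) = 0) → Uiso g = 0)
    -- the RKHS-compactified generator `W = K V K*`:
    (hKstdom : ∀ h : HK, Kst h ∈ V.domain)
    (W : HK →L[ℝ] HK)
    (hW : ∀ h (hh : Kst h ∈ V.domain), W h = K (V ⟨Kst h, hh⟩)) :
    Dense {f : Lp ℝ 2 μ | sqrtG f ∈ V.domain} ∧
    (∃ C : ℝ, 0 ≤ C ∧ ∀ f (hf : sqrtG f ∈ V.domain),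
      ‖sqrtG (V ⟨sqrtG f, hf⟩)‖ ≤ C * ‖f‖) ∧
    ∃ Vt : Lp ℝ 2 μ →L[ℝ] Lp ℝ 2 μ,
      (∀ f (hf : sqrtG f ∈ V.domain), Vt f = sqrtG (V ⟨sqrtG f, hf⟩)) ∧
      ContinuousLinearMap.adjoint Vt = -Vt ∧
      (∀ {ι : Type u} (b : HilbertBasis ι ℝ (Lp ℝ 2 μ)),
        Summable fun i => ‖Vt (b i)‖ ^ 2) ∧
      Vt = (ContinuousLinearMap.adjoint Uiso).comp (W.comp Uiso) ∧
      (∀ Vt' : Lp ℝ 2 μ →L[ℝ] Lp ℝ 2 μ,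
        ContinuousLinearMap.adjoint Vt' = -Vt' →
        (∀ f (hf : sqrtG f ∈ V.domain), Vt' f = sqrtG (V ⟨sqrtG f, hf⟩)) →
        Vt' = Vt) ∧
      (Function.Injective G →
        (∀ f, ‖Uiso f‖ = ‖f‖) ∧
        closure (Set.range Uiso) = closure (Set.range K)) := by
  classical
  -- `X` is nonempty and a.e. point lies in `X`
  have hXne : X.Nonempty := by
    by_contra h
    rw [Set.not_nonempty_iff_eq_empty] at h
    rw [h, Set.compl_empty, measure_univ] at hXfull
    exact one_ne_zero hXfull
  have hXae : ∀ᵐ x ∂μ, x ∈ X := mem_ae_iff.mpr hXfull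
  -- each `Φ t` is a homeomorphism, hence a measurable embedding
  have hΦtc : ∀ t, Continuous (Φ t) :=
    fun t => hΦcont.comp (continuous_const.prodMk continuous_id)
  have hΦinv : ∀ t x, Φ (-t) (Φ t x) = x := fun t x => by
    rw [hΦgrp, neg_add_cancel, hΦ0]
  have hΦinv' : ∀ t x, Φ t (Φ (-t) x) = x := fun t x => by
    rw [hΦgrp, add_neg_cancel, hΦ0]
  have hME : ∀ t, MeasurableEmbedding (Φ t) := fun t =>
    (Homeomorph.mk ⟨Φ t, Φ (-t), fun x => hΦinv t x, fun x => hΦinv' t x⟩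
      (hΦtc t) (hΦtc (-t))).measurableEmbedding
  -- `Koop 0 = id`
  have hKoop0 : ∀ f : Lp ℝ 2 μ, Koop 0 f = f := by
    intro f
    refine Lp.ext ?_
    filter_upwards [hKoop 0 f] with x hx
    rw [hx, hΦ0]
  -- the Koopman operators preserve the inner product
  have hKoopInner : ∀ t (f g : Lp ℝ 2 μ),
      (inner ℝ (Koop t f) (Koop t g) : ℝ) = inner ℝ f g := by
    intro t f g
    rw [L2.inner_def, L2.inner_def]
    have h1 : ∫ a, (inner ℝ ((Koop t f : Lp ℝ 2 μ) a) ((Koop t g : Lp ℝ 2 μ) a) : ℝ) ∂μ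
        = ∫ a, (f (Φ t a)) * (g (Φ t a)) ∂μ := by
      refine integral_congr_ae ?_
      filter_upwards [hKoop t f, hKoop t g] with a ha hb
      rw [ha, hb, RCLike.inner_apply]
      simp
      ring
    have h2 : ∫ a, (f (Φ t a)) * (g (Φ t a)) ∂μ = ∫ a, (f a) * (g a) ∂μ :=
      (hΦmp t).integral_comp (hME t) (fun y => (f y) * (g y))
    rw [h1, h2]
    refine integral_congr_ae ?_
    refine Eventually.of_forall fun a => ?_
    simp [RCLike.inner_apply]
    ring
  -- derivative of the Koopman orbit at 0
  have hKoopDeriv : ∀ f (hf : f ∈ V.domain),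
      HasDerivAt (fun t => Koop t f) (V ⟨f, hf⟩) 0 := by
    intro f hf
    rw [hasDerivAt_iff_tendsto_slope]
    have : slope (fun t => Koop t f) 0 = fun t : ℝ => t⁻¹ • (Koop t f - f) := by
      funext t
      simp [slope, hKoop0 f]
    rw [this]
    exact hVgen f hf
  -- skew-symmetry of `V` on its domain
  have skewV : ∀ f (hf : f ∈ V.domain) g (hg : g ∈ V.domain),
      (inner ℝ (V ⟨f, hf⟩) g : ℝ) + inner ℝ f (V ⟨g, hg⟩) = 0 := by
    intro f hf g hg
    have h1 : HasDerivAt (fun t => (inner ℝ (Koop t f) (Koop t g) : ℝ))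
        ((inner ℝ (Koop 0 f) (V ⟨g, hg⟩) : ℝ) + inner ℝ (V ⟨f, hf⟩) (Koop 0 g)) 0 :=
      (hKoopDeriv f hf).inner ℝ (hKoopDeriv g hg)
    have h2 : (fun t => (inner ℝ (Koop t f) (Koop t g) : ℝ)) = fun _ => (inner ℝ f g : ℝ) := by
      funext t; exact hKoopInner t f g
    rw [h2, hKoop0 f, hKoop0 g] at h1
    have h3 := h1.unique (hasDerivAt_const 0 _)
    rw [← h3]; ring
  -- inner product identities for `K` and `Kst`
  have hKinner : ∀ (u : Lp ℝ 2 μ) (y : HK), (inner ℝ y (K u) : ℝ) = inner ℝ (Kst y) u := by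
    intro u y
    have t := ContinuousLinearMap.adjoint_inner_left K u y
    rw [hadj] at t
    exact t.symm
  have hKinner' : ∀ (u : Lp ℝ 2 μ) (y : HK), (inner ℝ (K u) y : ℝ) = inner ℝ u (Kst y) := by
    intro u y
    have t := ContinuousLinearMap.adjoint_inner_right K u y
    rw [hadj] at t
    exact t.symm
  have hsqinner : ∀ (u v : Lp ℝ 2 μ), (inner ℝ (sqrtG u) v : ℝ) = inner ℝ u (sqrtG v) := by
    intro u v
    have t := ContinuousLinearMap.adjoint_inner_left sqrtG v u
    rw [hsqsa.adjoint_eq] at t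
    exact t
  -- `W` is skew-adjoint
  have Wskew : ContinuousLinearMap.adjoint W = -W := by
    refine ContinuousLinearMap.ext fun h => ?_
    refine ext_inner_right ℝ fun v => ?_
    rw [ContinuousLinearMap.adjoint_inner_left, ContinuousLinearMap.neg_apply,
      inner_neg_left, hW v (hKstdom v), hW h (hKstdom h)]
    have e1 := hKinner (V ⟨Kst v, hKstdom v⟩) h
    have e2 := hKinner' (V ⟨Kst h, hKstdom h⟩) v
    have e3 := skewV (Kst h) (hKstdom h) (Kst v) (hKstdom v)
    linarith [e1, e2, e3]
  -- the closure of the range of `sqrtG`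
  set R : Submodule ℝ (Lp ℝ 2 μ) := LinearMap.range (sqrtG : Lp ℝ 2 μ →ₗ[ℝ] Lp ℝ 2 μ) with hR
  set Sc : Submodule ℝ (Lp ℝ 2 μ) := R.topologicalClosure with hSc
  -- `Uiso` is isometric on `Sc`
  have hisoSc : ∀ a ∈ Sc, ‖Uiso a‖ = ‖a‖ := by
    intro a ha
    have hclosed : IsClosed {x : Lp ℝ 2 μ | ‖Uiso x‖ = ‖x‖} :=
      isClosed_eq (continuous_norm.comp Uiso.continuous) continuous_norm
    have hsub : (R : Set (Lp ℝ 2 μ)) ⊆ {x | ‖Uiso x‖ = ‖x‖} := by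
      rintro x ⟨f, rfl⟩
      exact hUinit f
    have : a ∈ closure (R : Set (Lp ℝ 2 μ)) := by
      rw [← Submodule.topologicalClosure_coe]; exact ha
    exact closure_minimal hsub hclosed this
  -- `Uiso` preserves inner products against vectors in the range of `sqrtG`
  have hinner : ∀ (g : Lp ℝ 2 μ), ∀ a ∈ Sc,
      (inner ℝ (Uiso a) (Uiso (sqrtG g)) : ℝ) = inner ℝ a (sqrtG g) := by
    intro g a ha
    have hclosed : IsClosed {x : Lp ℝ 2 μ |
        (inner ℝ (Uiso x) (Uiso (sqrtG g)) : ℝ) = inner ℝ x (sqrtG g)} := by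
      refine isClosed_eq ?_ ?_
      · exact (Continuous.inner (Uiso.continuous) continuous_const)
      · exact (Continuous.inner continuous_id continuous_const)
    have hsub : (R : Set (Lp ℝ 2 μ)) ⊆ {x |
        (inner ℝ (Uiso x) (Uiso (sqrtG g)) : ℝ) = inner ℝ x (sqrtG g)} := by
      rintro x ⟨f, rfl⟩
      show (inner ℝ (Uiso (sqrtG f)) (Uiso (sqrtG g)) : ℝ) = inner ℝ (sqrtG f) (sqrtG g)
      rw [real_inner_eq_norm_add_mul_self_sub_norm_mul_self_sub_norm_mul_self_div_two,
        real_inner_eq_norm_add_mul_self_sub_norm_mul_self_sub_norm_mul_self_div_two]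
      rw [← map_add, ← map_add, hUinit, hUinit f, hUinit g]
    have : a ∈ closure (R : Set (Lp ℝ 2 μ)) := by
      rw [← Submodule.topologicalClosure_coe]; exact ha
    exact closure_minimal hsub hclosed this
  have hsqmem : ∀ f : Lp ℝ 2 μ, sqrtG f ∈ Sc := fun f =>
    Submodule.le_topologicalClosure R ⟨f, rfl⟩
  -- `Kst ∘ Uiso = sqrtG`
  have hKUf : ∀ f : Lp ℝ 2 μ, Kst (Uiso f) = sqrtG f := by
    intro f
    obtain ⟨y, hy, z, hz, hf⟩ := Sc.exists_add_mem_mem_orthogonal f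
    have hUz : Uiso z = 0 := by
      refine hUker z fun g => ?_
      have := (Submodule.mem_orthogonal Sc z).mp hz (sqrtG g) (hsqmem g)
      rw [real_inner_comm] at this
      exact this
    refine ext_inner_right ℝ fun v => ?_
    have e0 : (inner ℝ (Kst (Uiso f)) v : ℝ) = inner ℝ (Uiso f) (K v) := (hKinner v (Uiso f)).symm
    have e1 : K v = Uiso (sqrtG v) := by rw [hpolar]; rfl
    have e2 : Uiso f = Uiso y := by rw [hf, map_add, hUz, add_zero]
    have e3 : (inner ℝ (Uiso y) (Uiso (sqrtG v)) : ℝ) = inner ℝ y (sqrtG v) := hinner v y hy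
    have e4 : (inner ℝ z (sqrtG v) : ℝ) = 0 := by
      have := (Submodule.mem_orthogonal Sc z).mp hz (sqrtG v) (hsqmem v)
      rw [real_inner_comm] at this
      exact this
    have e5 : (inner ℝ f (sqrtG v) : ℝ) = inner ℝ y (sqrtG v) := by
      rw [hf, inner_add_left, e4, add_zero]
    rw [e0, e1, e2, e3, ← e5, ← hsqinner]
  -- every `sqrtG f` lies in the domain of `V`
  have hdomall : ∀ f : Lp ℝ 2 μ, sqrtG f ∈ V.domain := by
    intro f
    rw [← hKUf f]
    exact hKstdom _
  have hKU : Kst.comp Uiso = sqrtG := ContinuousLinearMap.ext hKUf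
  -- `(adjoint Uiso) ∘ K = sqrtG`
  have hUK : (ContinuousLinearMap.adjoint Uiso).comp K = sqrtG := by
    have := congrArg ContinuousLinearMap.adjoint hKU
    rw [ContinuousLinearMap.adjoint_comp, hsqsa.adjoint_eq, ← hadj,
      ContinuousLinearMap.adjoint_adjoint] at this
    exact this
  set Vt : Lp ℝ 2 μ →L[ℝ] Lp ℝ 2 μ :=
    (ContinuousLinearMap.adjoint Uiso).comp (W.comp Uiso) with hVtdef
  -- Vt agrees with sqrtG ∘ V ∘ sqrtG
  have hVtf : ∀ f (hf : sqrtG f ∈ V.domain), Vt f = sqrtG (V ⟨sqrtG f, hf⟩) := by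
    intro f hf
    have e1 : Vt f = ContinuousLinearMap.adjoint Uiso (W (Uiso f)) := rfl
    have e2 : W (Uiso f) = K (V ⟨Kst (Uiso f), hKstdom (Uiso f)⟩) := hW _ _
    have e3 : (⟨Kst (Uiso f), hKstdom (Uiso f)⟩ : V.domain) = ⟨sqrtG f, hf⟩ :=
      Subtype.ext (hKUf f)
    have e4 : ContinuousLinearMap.adjoint Uiso (K (V ⟨sqrtG f, hf⟩)) = sqrtG (V ⟨sqrtG f, hf⟩) :=
      congrFun (congrArg (fun (T : Lp ℝ 2 μ →L[ℝ] Lp ℝ 2 μ) => ⇑T) hUK) _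
    rw [e1, e2, e3, e4]
  -- skew-adjointness of Vt
  have hVtskew : ContinuousLinearMap.adjoint Vt = -Vt := by
    rw [hVtdef, ContinuousLinearMap.adjoint_comp, ContinuousLinearMap.adjoint_comp,
      ContinuousLinearMap.adjoint_adjoint, Wskew]
    ext f
    simp [ContinuousLinearMap.comp_apply]
  -- ‖sqrtG e‖^2 = ‖K e‖^2
  have hsqK : ∀ e : Lp ℝ 2 μ, ‖sqrtG e‖ ^ 2 = ‖K e‖ ^ 2 := by
    intro e
    rw [← real_inner_self_eq_norm_sq, ← real_inner_self_eq_norm_sq]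
    have e1 : (inner ℝ (sqrtG e) (sqrtG e) : ℝ) = inner ℝ e (G e) := by
      rw [hsqinner, ← hsq]; rfl
    have e2 : (inner ℝ (K e) (K e) : ℝ) = inner ℝ e (G e) := by
      rw [hKinner', hGdef]; rfl
    rw [e1, e2]
  -- the bound `‖V (Kst h)‖ ≤ M * ‖h‖`
  obtain ⟨M, hM0, hVKbound⟩ : ∃ M : ℝ, 0 ≤ M ∧
      ∀ h : HK, ‖(V ⟨Kst h, hKstdom h⟩ : Lp ℝ 2 μ)‖ ≤ M * ‖h‖ := by
    set Y : Set α := (fun p : ℝ × α => Φ p.1 p.2) '' (Set.Icc (-1:ℝ) 1 ×ˢ X) with hY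
    have hYc : IsCompact Y := ((isCompact_Icc).prod hXc).image hΦcont
    have hYne : Y.Nonempty := by
      obtain ⟨x, hx⟩ := hXne
      exact ⟨Φ 0 x, ⟨(0, x), ⟨by norm_num, hx⟩, rfl⟩⟩
    obtain ⟨y₀, hy₀, hy₀max⟩ := hYc.exists_isMaxOn hYne (hφdc.norm.continuousOn)
    refine ⟨‖φd y₀‖, norm_nonneg _, ?_⟩
    intro h
    set M := ‖φd y₀‖ with hM
    have hMb : ∀ s ∈ Set.Icc (-1:ℝ) 1, ∀ x ∈ X, ‖φd (Φ s x)‖ ≤ M :=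
      fun s hs x hx => hy₀max ⟨(s, x), ⟨hs, hx⟩, rfl⟩
    have hlim := hVgen (Kst h) (hKstdom h)
    have hnorm : Tendsto (fun t : ℝ => ‖t⁻¹ • (Koop t (Kst h) - Kst h)‖) (𝓝[≠] (0:ℝ))
        (𝓝 ‖(V ⟨Kst h, hKstdom h⟩ : Lp ℝ 2 μ)‖) := hlim.norm
    refine le_of_tendsto hnorm ?_
    have hIcc : ∀ᶠ t : ℝ in 𝓝[≠] (0:ℝ), t ∈ Set.Icc (-1:ℝ) 1 :=
      eventually_nhdsWithin_of_eventually_nhds (Icc_mem_nhds (by norm_num) (by norm_num))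
    filter_upwards [hIcc, self_mem_nhdsWithin] with t ht ht0
    -- pointwise bound for the difference quotient
    have key : ∀ᵐ x ∂μ, ‖(↑↑(t⁻¹ • (Koop t (Kst h) - Kst h)) : α → ℝ) x‖ ≤ M * ‖h‖ := by
      have e2 : (↑↑(Koop t (Kst h)) : α → ℝ) =ᵐ[μ] fun x => (Kst h) (Φ t x) := hKoop t (Kst h)
      have e3 : (fun x => (↑↑(Kst h) : α → ℝ) (Φ t x)) =ᵐ[μ]
          fun x => (inner ℝ (φf (Φ t x)) h : ℝ) :=
        (hΦmp t).quasiMeasurePreserving.ae_eq_comp (hKst h)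
      have e4 : (↑↑(Kst h) : α → ℝ) =ᵐ[μ] fun x => (inner ℝ (φf x) h : ℝ) := hKst h
      have e1 : (↑↑(t⁻¹ • (Koop t (Kst h) - Kst h)) : α → ℝ) =ᵐ[μ]
          fun x => t⁻¹ * ((Koop t (Kst h)) x - (Kst h) x) := by
        filter_upwards [Lp.coeFn_smul t⁻¹ (Koop t (Kst h) - Kst h),
          Lp.coeFn_sub (Koop t (Kst h)) (Kst h)] with x hx1 hx2
        rw [hx1]
        simp only [Pi.smul_apply, hx2, Pi.sub_apply, smul_eq_mul]
      filter_upwards [e1, e2, e3, e4, hXae] with x hx1 hx2 hx3 hx4 hxX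
      rw [hx1, hx2, hx3, hx4]
      -- mean value estimate
      have hg : ∀ s : ℝ, HasDerivAt (fun s : ℝ => (inner ℝ (φf (Φ s x)) h : ℝ))
          (inner ℝ (φd (Φ s x)) h : ℝ) s := by
        intro s₀
        have base : HasDerivAt (fun u : ℝ => φf (Φ u (Φ s₀ x))) (φd (Φ s₀ x)) 0 :=
          hφd (Φ s₀ x)
        have hsub : HasDerivAt (fun s : ℝ => s - s₀) 1 s₀ := (hasDerivAt_id s₀).sub_const s₀
        have base' : HasDerivAt (fun u : ℝ => φf (Φ u (Φ s₀ x))) (φd (Φ s₀ x)) (s₀ - s₀) := by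
          rw [sub_self]; exact base
        have hcomp := HasDerivAt.scomp (𝕜 := ℝ) (h := fun s : ℝ => s - s₀) s₀ base' hsub
        have heq : ((fun u : ℝ => φf (Φ u (Φ s₀ x))) ∘ fun s : ℝ => s - s₀)
            = fun s : ℝ => φf (Φ s x) := by
          funext s
          simp only [Function.comp_apply, hΦgrp, sub_add_cancel]
        rw [heq, one_smul] at hcomp
        have := (hcomp.inner ℝ (hasDerivAt_const s₀ h))
        simpa using this
      have hbound : ∀ s ∈ Set.Icc (-1:ℝ) 1,
          ‖(inner ℝ (φd (Φ s x)) h : ℝ)‖ ≤ M * ‖h‖ := by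
        intro s hs
        refine le_trans (abs_real_inner_le_norm _ _) ?_
        exact mul_le_mul_of_nonneg_right (hMb s hs x hxX) (norm_nonneg h)
      have hmvt := Convex.norm_image_sub_le_of_norm_hasDerivWithin_le
        (f := fun s : ℝ => (inner ℝ (φf (Φ s x)) h : ℝ))
        (f' := fun s : ℝ => (inner ℝ (φd (Φ s x)) h : ℝ))
        (s := Set.Icc (-1:ℝ) 1) (x := (0:ℝ)) (y := t)
        (fun s hs => (hg s).hasDerivWithinAt) hbound (convex_Icc _ _)
        (by constructor <;> norm_num) ht
      simp only [hΦ0, sub_zero, Real.norm_eq_abs] at hmvt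
      have htne : |t| ≠ 0 := fun hc => ht0 (abs_eq_zero.mp hc)
      have : ‖t⁻¹ * ((inner ℝ (φf (Φ t x)) h : ℝ) - inner ℝ (φf x) h)‖
          = |t|⁻¹ * ‖(inner ℝ (φf (Φ t x)) h : ℝ) - inner ℝ (φf x) h‖ := by
        rw [norm_mul, norm_inv, Real.norm_eq_abs]
      rw [this]
      have h5 : ‖(inner ℝ (φf (Φ t x)) h : ℝ) - inner ℝ (φf x) h‖ ≤ M * ‖h‖ * |t| := by
        simpa using hmvt
      calc |t|⁻¹ * ‖(inner ℝ (φf (Φ t x)) h : ℝ) - inner ℝ (φf x) h‖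
          ≤ |t|⁻¹ * (M * ‖h‖ * |t|) := by
            exact mul_le_mul_of_nonneg_left h5 (by positivity)
        _ = M * ‖h‖ * (|t|⁻¹ * |t|) := by ring
        _ = M * ‖h‖ := by rw [inv_mul_cancel₀ htne, mul_one]
    have := Lp.norm_le_of_ae_bound (f := t⁻¹ • (Koop t (Kst h) - Kst h))
      (mul_nonneg (norm_nonneg (φd y₀)) (norm_nonneg h)) key
    have hμ1 : (measureUnivNNReal μ : ℝ) = 1 := by
      have := coe_measureUnivNNReal μ
      rw [measure_univ] at this
      exact_mod_cast this
    rwa [hμ1, Real.one_rpow, one_mul] at this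
  -- `‖Vt e‖ ≤ M * ‖sqrtG e‖`
  have hVtle : ∀ e : Lp ℝ 2 μ, ‖Vt e‖ ≤ M * ‖sqrtG e‖ := by
    intro e
    rcases eq_or_lt_of_le (norm_nonneg (Vt e)) with h0 | h0
    · rw [← h0]
      exact mul_nonneg hM0 (norm_nonneg _)
    have key : ‖Vt e‖ * ‖Vt e‖ ≤ (M * ‖sqrtG e‖) * ‖Vt e‖ := by
      set c := Vt e with hc
      have e1 : ‖Vt e‖ * ‖Vt e‖ = inner ℝ (Vt e) c := (real_inner_self_eq_norm_mul_norm _).symm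
      have e2 : (inner ℝ (Vt e) c : ℝ) = -inner ℝ e (Vt c) := by
        have t := ContinuousLinearMap.adjoint_inner_right Vt e c
        rw [hVtskew] at t
        simp only [ContinuousLinearMap.neg_apply, inner_neg_right] at t
        linarith [t]
      have e3 : Vt c = sqrtG (V ⟨sqrtG c, hdomall c⟩) := hVtf c (hdomall c)
      have e4 : (inner ℝ e (sqrtG (V ⟨sqrtG c, hdomall c⟩)) : ℝ)
          = inner ℝ (sqrtG e) (V ⟨sqrtG c, hdomall c⟩) := (hsqinner e _).symm
      have e5 : (⟨sqrtG c, hdomall c⟩ : V.domain) = ⟨Kst (Uiso c), hKstdom (Uiso c)⟩ :=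
        Subtype.ext (hKUf c).symm
      have e6 : ‖(V ⟨sqrtG c, hdomall c⟩ : Lp ℝ 2 μ)‖ ≤ M * ‖c‖ := by
        rw [e5]
        exact le_trans (hVKbound (Uiso c)) (by
          have := hUcontr c
          nlinarith [norm_nonneg (Uiso c)])
      have e7 : -(inner ℝ (sqrtG e) (V ⟨sqrtG c, hdomall c⟩) : ℝ)
          ≤ ‖sqrtG e‖ * (M * ‖c‖) := by
        refine le_trans (neg_le_abs _) (le_trans (abs_real_inner_le_norm _ _) ?_)
        exact mul_le_mul_of_nonneg_left e6 (norm_nonneg _)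
      calc ‖Vt e‖ * ‖Vt e‖ = -inner ℝ (sqrtG e) (V ⟨sqrtG c, hdomall c⟩) := by
            rw [e1, e2, e3, e4]
        _ ≤ ‖sqrtG e‖ * (M * ‖c‖) := e7
        _ = (M * ‖sqrtG e‖) * ‖Vt e‖ := by rw [hc]; ring
    exact le_of_mul_le_mul_right key h0
  -- Hilbert--Schmidt property
  have hHS : ∀ {ι : Type u} (b : HilbertBasis ι ℝ (Lp ℝ 2 μ)),
      Summable fun i => ‖Vt (b i)‖ ^ 2 := by
    obtain ⟨x₀, hx₀X, hx₀max⟩ := hXc.exists_isMaxOn hXne (hφc.norm.continuousOn)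
    set B : ℝ := ‖φf x₀‖ ^ 2 with hB
    obtain ⟨w, bH, hbH⟩ := exists_hilbertBasis ℝ HK
    -- `‖Kst h‖²` as an integral
    have hKstsq : ∀ h : HK, ‖Kst h‖ ^ 2 = ∫ x, (inner ℝ (φf x) h : ℝ) ^ 2 ∂μ := by
      intro h
      rw [← real_inner_self_eq_norm_sq, L2.inner_def]
      refine integral_congr_ae ?_
      filter_upwards [hKst h] with x hx
      simp only [RCLike.inner_apply, conj_trivial, hx]
      ring
    have hint : ∀ h : HK, Integrable (fun x => (inner ℝ (φf x) h : ℝ) ^ 2) μ := by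
      intro h
      refine (L2.integrable_inner (𝕜 := ℝ) (Kst h) (Kst h)).congr ?_
      filter_upwards [hKst h] with x hx
      simp only [RCLike.inner_apply, conj_trivial, hx]
      ring
    -- `Kst` is Hilbert--Schmidt
    have S1 : Summable fun j : w => ‖Kst (bH j)‖ ^ 2 := by
      refine summable_of_sum_le (c := B) (fun j => sq_nonneg _) ?_
      intro u
      have e1 : ∑ j ∈ u, ‖Kst (bH j)‖ ^ 2
          = ∫ x, ∑ j ∈ u, (inner ℝ (φf x) (bH j) : ℝ) ^ 2 ∂μ := by
        rw [integral_finset_sum u (fun j _ => hint (bH j))]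
        exact Finset.sum_congr rfl fun j _ => hKstsq (bH j)
      rw [e1]
      have e2 : ∫ x, ∑ j ∈ u, (inner ℝ (φf x) (bH j) : ℝ) ^ 2 ∂μ ≤ ∫ _x, B ∂μ := by
        refine integral_mono_ae (integrable_finset_sum u (fun j _ => hint (bH j)))
          (integrable_const B) ?_
        filter_upwards [hXae] with x hxX
        have bes : ∑ j ∈ u, (inner ℝ (φf x) (bH j) : ℝ) ^ 2 ≤ ‖φf x‖ ^ 2 := by
          have t := Orthonormal.sum_inner_products_le (𝕜 := ℝ) (φf x)
            (v := fun j : w => bH j) (s := u) bH.orthonormal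
          have : ∀ j : w, ‖(inner ℝ (bH j) (φf x) : ℝ)‖ ^ 2 = (inner ℝ (φf x) (bH j) : ℝ) ^ 2 := by
            intro j
            rw [Real.norm_eq_abs, sq_abs, real_inner_comm]
          rw [Finset.sum_congr rfl fun j _ => (this j).symm]
          exact t
        have hBle : ‖φf x‖ ^ 2 ≤ B := by
          have := hx₀max hxX
          simp only [Set.mem_setOf_eq] at this
          nlinarith [norm_nonneg (φf x)]
        exact le_trans bes hBle
      refine le_trans e2 ?_
      rw [integral_const, probReal_univ]
      simp
    -- Parseval for `K e`
    have hPars : ∀ e : Lp ℝ 2 μ,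
        (Summable fun j : w => (inner ℝ (K e) (bH j) : ℝ) ^ 2) ∧
        ∑' j : w, (inner ℝ (K e) (bH j) : ℝ) ^ 2 = ‖K e‖ ^ 2 := by
      intro e
      have hfun : (fun j : w => (inner ℝ (K e) (bH j) : ℝ) ^ 2)
          = fun j : w => (inner ℝ (K e) (bH j) : ℝ) * inner ℝ (bH j) (K e) := by
        funext j
        rw [real_inner_comm (bH j) (K e)]
        ring
      constructor
      · rw [hfun]
        exact bH.summable_inner_mul_inner (K e) (K e)
      · rw [hfun]
        rw [bH.tsum_inner_mul_inner (K e) (K e)]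
        exact real_inner_self_eq_norm_sq _
    -- `K` is Hilbert--Schmidt
    have S2 : ∀ {ι : Type u} (b : HilbertBasis ι ℝ (Lp ℝ 2 μ)),
        Summable fun i => ‖K (b i)‖ ^ 2 := by
      intro ι b
      refine summable_of_sum_le (c := ∑' j : w, ‖Kst (bH j)‖ ^ 2)
        (fun i => sq_nonneg _) ?_
      intro u
      have e2 : ∑ i ∈ u, ‖K (b i)‖ ^ 2
          = ∑' j : w, ∑ i ∈ u, (inner ℝ (K (b i)) (bH j) : ℝ) ^ 2 := by
        rw [Summable.tsum_finsetSum (fun i _ => (hPars (b i)).1)]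
        exact (Finset.sum_congr rfl fun i _ => ((hPars (b i)).2).symm)
      rw [e2]
      refine Summable.tsum_le_tsum ?_ (summable_sum fun i _ => (hPars (b i)).1) S1
      intro j
      have hrw : ∀ i : ι, (inner ℝ (K (b i)) (bH j) : ℝ) ^ 2
          = ‖(inner ℝ (b i) (Kst (bH j)) : ℝ)‖ ^ 2 := by
        intro i
        rw [hKinner' (b i) (bH j), Real.norm_eq_abs, sq_abs]
      rw [Finset.sum_congr rfl fun i _ => hrw i]
      exact Orthonormal.sum_inner_products_le (𝕜 := ℝ) (Kst (bH j))
        (v := fun i : ι => b i) (s := u) b.orthonormal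
    intro ι b
    have final : ∀ i, ‖Vt (b i)‖ ^ 2 ≤ M ^ 2 * ‖K (b i)‖ ^ 2 := by
      intro i
      have h1 := hVtle (b i)
      have h2 : ‖Vt (b i)‖ ^ 2 ≤ M ^ 2 * ‖sqrtG (b i)‖ ^ 2 := by
        nlinarith [norm_nonneg (Vt (b i)), norm_nonneg (sqrtG (b i)), hM0]
      rw [hsqK (b i)] at h2
      exact h2
    exact Summable.of_nonneg_of_le (fun i => sq_nonneg _) final ((S2 b).mul_left (M ^ 2))
  refine ⟨?_, ⟨‖Vt‖, norm_nonneg _, ?_⟩, Vt, hVtf, hVtskew, hHS, rfl, ?_, ?_⟩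
  · have : {f : Lp ℝ 2 μ | sqrtG f ∈ V.domain} = Set.univ :=
      Set.eq_univ_of_forall hdomall
    rw [this]
    exact dense_univ
  · intro f hf
    rw [← hVtf f hf]
    exact Vt.le_opNorm f
  · intro Vt' hskew' hagree
    refine ContinuousLinearMap.ext fun f => ?_
    rw [hagree f (hdomall f), ← hVtf f (hdomall f)]
  · intro hGinj
    have hsinj : ∀ f : Lp ℝ 2 μ, sqrtG f = 0 → f = 0 := by
      intro f hf
      have : G f = G 0 := by
        rw [← hsq, map_zero]
        show sqrtG (sqrtG f) = 0
        rw [hf, map_zero]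
      exact hGinj this
    have hdenseR : closure (R : Set (Lp ℝ 2 μ)) = Set.univ := by
      have : Rᗮ = ⊥ := by
        rw [Submodule.eq_bot_iff]
        intro g hg
        have h1 : ∀ f : Lp ℝ 2 μ, (inner ℝ (sqrtG f) g : ℝ) = 0 := fun f =>
          (Submodule.mem_orthogonal R g).mp hg (sqrtG f) ⟨f, rfl⟩
        have h2 : sqrtG g = 0 := by
          have h3 : (inner ℝ (sqrtG g) (sqrtG g) : ℝ) = 0 :=
            (hsqinner (sqrtG g) g).symm.trans (h1 (sqrtG g))
          exact inner_self_eq_zero.mp h3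
        exact hsinj g h2
      have htop : R.topologicalClosure = ⊤ :=
        Submodule.topologicalClosure_eq_top_iff.mpr this
      rw [← Submodule.topologicalClosure_coe, htop]
      rfl
    constructor
    · intro f
      have hclosed : IsClosed {x : Lp ℝ 2 μ | ‖Uiso x‖ = ‖x‖} :=
        isClosed_eq (continuous_norm.comp Uiso.continuous) continuous_norm
      have hsub : (R : Set (Lp ℝ 2 μ)) ⊆ {x | ‖Uiso x‖ = ‖x‖} := by
        rintro x ⟨u, rfl⟩
        exact hUinit u
      have : (Set.univ : Set (Lp ℝ 2 μ)) ⊆ {x | ‖Uiso x‖ = ‖x‖} := by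
        rw [← hdenseR]
        exact closure_minimal hsub hclosed
      exact this (Set.mem_univ f)
    · have hKrange : Set.range (K : Lp ℝ 2 μ →L[ℝ] HK) = Uiso '' (R : Set (Lp ℝ 2 μ)) := by
        ext u
        constructor
        · rintro ⟨f, rfl⟩
          exact ⟨sqrtG f, ⟨f, rfl⟩, by rw [hpolar]; rfl⟩
        · rintro ⟨x, ⟨f, rfl⟩, rfl⟩
          exact ⟨f, by rw [hpolar]; rfl⟩
      apply le_antisymm
      · refine closure_minimal ?_ isClosed_closure
        rintro u ⟨f, rfl⟩
        have h1 : f ∈ closure (R : Set (Lp ℝ 2 μ)) := by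
          rw [hdenseR]; exact Set.mem_univ f
        have h2 : Uiso f ∈ Uiso '' closure (R : Set (Lp ℝ 2 μ)) := ⟨f, h1, rfl⟩
        have h3 := image_closure_subset_closure_image (f := ⇑Uiso)
          (s := (R : Set (Lp ℝ 2 μ))) Uiso.continuous h2
        rw [← hKrange] at h3
        exact h3
      · refine closure_mono ?_
        rintro u ⟨f, rfl⟩
        exact ⟨sqrtG f, by rw [hpolar]; rfl⟩
end

section
/- Let G : L²(ν) → L²(ν) be a compact, positive, self-adjoint Markov operator that is ergodic (Gf = f iff f is constant) with simple top eigenvalue λ₀ = 1 and eigenvalues 1 = λ₀ > λ₁ ≥ λ₂ ≥ … > 0, with orthonormal eigenbasis {φ_j}. For τ > 0 define G_τ with the same eigenfunctions and eigenvalues λ_{τ,j} = exp(τ(1 − λ_j^{-1})), and set G₀ = Id. Then the family {G_τ}_{τ≥0} is a strongly continuous self-adjoint semigroup of Markov operators: G_{τ₁+τ₂} = G_{τ₁} G_{τ₂} for all τ₁, τ₂ ≥ 0, each G_τ (τ > 0) is positive, preserves integrals (∫ G_τ f dν = ∫ f dν), fixes constants, is ergodic, and G_τ → Id strongly as τ →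 0⁺. -/
open MeasureTheory Filter Topology

section aux
variable {H F : Type*} [NormedAddCommGroup H] [InnerProductSpace ℝ H]
  [NormedAddCommGroup F] [NormedSpace ℝ F]

theorem stmt8_ext {ι : Type*} (b : HilbertBasis ι ℝ H) {A B : H →L[ℝ] F}
    (h : ∀ i, A (b i) = B (b i)) : A = B := by
  refine ContinuousLinearMap.ext_on
    (Submodule.dense_iff_topologicalClosure_eq_top.mpr b.dense_span) ?_
  rintro x ⟨i, rfl⟩
  exact h i

end aux

set_option maxHeartbeats 1000000 in
/-- Markov semigroup theorem. Let `G` be a compact, positive, self-adjoint, strictly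
positive (injective) Markov operator on `L²(ν)` that is ergodic, with orthonormal
eigenbasis `{φ_j}` (with `φ₀` the constant function `1`) and eigenvalues
`1 = λ₀ > λ₁ ≥ λ₂ ≥ … > 0`. For `τ > 0` define `G_τ` with the same eigenfunctions and
eigenvalues `λ_{τ,j} = exp(τ(1 − λ_j⁻¹))`, and set `G₀ = Id`. Then `{G_τ}_{τ≥0}` is a
strongly continuous self-adjoint semigroup of Markov operators: `G_{τ₁+τ₂} = G_{τ₁} G_{τ₂}`;
each `G_τ` (τ > 0) is positive, preserves integrals, fixes constants, and is ergodic; and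
`G_τ → Id` strongly as `τ → 0⁺`. -/
theorem stmt8 {α : Type*} [MeasurableSpace α]
    (ν : Measure α) [IsProbabilityMeasure ν]
    (G : Lp ℝ 2 ν →L[ℝ] Lp ℝ 2 ν)
    (hGcpt : IsCompactOperator G) (hGsa : IsSelfAdjoint G)
    (hGinj : Function.Injective G)
    (b : HilbertBasis ℕ ℝ (Lp ℝ 2 ν))
    (lam : ℕ → ℝ)
    (hGeig : ∀ j, G (b j) = lam j • b j)
    (hlam0 : lam 0 = 1) (hlampos : ∀ j, 0 < lam j)
    (hanti : Antitone lam) (hlt : ∀ j, 1 ≤ j → lam j < 1)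
    (hb0 : ⇑(b 0) =ᵐ[ν] fun _ => (1 : ℝ))
    (Gτ : ℝ → Lp ℝ 2 ν →L[ℝ] Lp ℝ 2 ν)
    (hGτ0 : Gτ 0 = ContinuousLinearMap.id ℝ (Lp ℝ 2 ν))
    (hGτeig : ∀ τ > (0 : ℝ), ∀ j, Gτ τ (b j) = Real.exp (τ * (1 - (lam j)⁻¹)) • b j) :
    (∀ τ₁ τ₂ : ℝ, 0 ≤ τ₁ → 0 ≤ τ₂ → Gτ (τ₁ + τ₂) = (Gτ τ₁).comp (Gτ τ₂)) ∧
    (∀ τ : ℝ, 0 ≤ τ → IsSelfAdjoint (Gτ τ)) ∧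
    (∀ τ > (0 : ℝ), ∀ f : Lp ℝ 2 ν, 0 ≤ (inner ℝ f (Gτ τ f) : ℝ)) ∧
    (∀ τ > (0 : ℝ), ∀ f : Lp ℝ 2 ν, ∫ x, (Gτ τ f) x ∂ν = ∫ x, f x ∂ν) ∧
    (∀ τ > (0 : ℝ), ∀ (c : ℝ) (f : Lp ℝ 2 ν), ⇑f =ᵐ[ν] (fun _ => c) → Gτ τ f = f) ∧
    (∀ τ > (0 : ℝ), ∀ f : Lp ℝ 2 ν, Gτ τ f = f → ∃ c : ℝ, ⇑f =ᵐ[ν] fun _ => c) ∧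
    (∀ f : Lp ℝ 2 ν, Tendsto (fun τ => Gτ τ f) (𝓝[>] (0 : ℝ)) (𝓝 f)) := by
  set mu : ℝ → ℕ → ℝ := fun τ j => Real.exp (τ * (1 - (lam j)⁻¹)) with hmu
  have hBj : ∀ τ, 0 < τ → ∀ j, Gτ τ (b j) = mu τ j • b j := fun τ hτ j => hGτeig τ hτ j
  have hlamle : ∀ j, lam j ≤ 1 := fun j => hlam0 ▸ hanti (Nat.zero_le j)
  have hinvge : ∀ j, 1 ≤ (lam j)⁻¹ := fun j => (one_le_inv_iff₀.mpr ⟨hlampos j, hlamle j⟩)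
  have hmu_pos : ∀ τ j, 0 < mu τ j := fun τ j => Real.exp_pos _
  have hmu_le_one : ∀ τ, 0 ≤ τ → ∀ j, mu τ j ≤ 1 := by
    intro τ hτ j
    have h1 := hinvge j
    have : τ * (1 - (lam j)⁻¹) ≤ 0 := by nlinarith
    simpa [hmu] using Real.exp_le_one_iff.mpr this
  have hmu0 : ∀ τ, mu τ 0 = 1 := by
    intro τ; simp [hmu, hlam0]
  have hON : ∀ i j : ℕ, (inner ℝ (b i) (b j) : ℝ) = if i = j then 1 else 0 :=
    orthonormal_iff_ite.mp b.orthonormal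
  -- Part 1 : semigroup property
  have part1 : ∀ τ₁ τ₂ : ℝ, 0 ≤ τ₁ → 0 ≤ τ₂ → Gτ (τ₁ + τ₂) = (Gτ τ₁).comp (Gτ τ₂) := by
    intro τ₁ τ₂ h1 h2
    rcases h1.eq_or_lt with rfl | h1
    · simp [hGτ0]
    rcases h2.eq_or_lt with rfl | h2
    · simp [hGτ0]
    refine stmt8_ext b ?_
    intro j
    rw [ContinuousLinearMap.comp_apply, hBj _ (by positivity) j, hBj _ h2 j, _root_.map_smul,
      hBj _ h1 j, smul_smul]
    simp only [hmu]
    rw [← Real.exp_add]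
    congr 1
    ring
  -- symmetry
  have hsym : ∀ τ, 0 < τ → ∀ x y : Lp ℝ 2 ν, (inner ℝ (Gτ τ x) y : ℝ) = inner ℝ x (Gτ τ y) := by
    intro τ hτ
    have key : ∀ i : ℕ, ∀ y : Lp ℝ 2 ν, (inner ℝ (Gτ τ (b i)) y : ℝ) = inner ℝ (b i) (Gτ τ y) := by
      intro i
      have heq : (innerSL ℝ (Gτ τ (b i)) : Lp ℝ 2 ν →L[ℝ] ℝ) = (innerSL ℝ (b i)).comp (Gτ τ) := by
        refine stmt8_ext b ?_
        intro j
        simp only [innerSL_apply_apply, ContinuousLinearMap.comp_apply]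
        rw [hBj _ hτ i, hBj _ hτ j, real_inner_smul_left, real_inner_smul_right]
        rcases eq_or_ne i j with rfl | h
        · rfl
        · rw [hON i j, if_neg h]; ring
      intro y
      have := congrFun (congrArg (fun A : Lp ℝ 2 ν →L[ℝ] ℝ => ⇑A) heq) y
      simpa using this
    intro x y
    have heq : (innerSL ℝ (Gτ τ y) : Lp ℝ 2 ν →L[ℝ] ℝ) = (innerSL ℝ y).comp (Gτ τ) := by
      refine stmt8_ext b ?_
      intro i
      simp only [innerSL_apply_apply, ContinuousLinearMap.comp_apply]
      exact (real_inner_comm _ _).trans (((key i y).symm).trans (real_inner_comm _ _))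
    have h2 := congrFun (congrArg (fun A : Lp ℝ 2 ν →L[ℝ] ℝ => ⇑A) heq) x
    simp only [innerSL_apply_apply, ContinuousLinearMap.comp_apply] at h2
    exact (real_inner_comm _ _).trans (h2.symm.trans (real_inner_comm _ _))
  -- Part 2 : self-adjointness
  have part2 : ∀ τ : ℝ, 0 ≤ τ → IsSelfAdjoint (Gτ τ) := by
    intro τ hτ
    rcases hτ.eq_or_lt with rfl | hτ
    · rw [hGτ0]
      exact ContinuousLinearMap.isSelfAdjoint_iff_isSymmetric.mpr (fun x y => rfl)
    · exact ContinuousLinearMap.isSelfAdjoint_iff_isSymmetric.mpr (fun x y => hsym τ hτ x y)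
  -- coefficient formula
  have hcoef : ∀ τ, 0 < τ → ∀ (f : Lp ℝ 2 ν) (j : ℕ),
      (inner ℝ (b j) (Gτ τ f) : ℝ) = mu τ j * inner ℝ (b j) f := by
    intro τ hτ f j
    rw [← hsym τ hτ, hBj _ hτ j, real_inner_smul_left]
  -- Part 3 : positivity
  have part3 : ∀ τ > (0 : ℝ), ∀ f : Lp ℝ 2 ν, 0 ≤ (inner ℝ f (Gτ τ f) : ℝ) := by
    intro τ hτ f
    have hs := b.hasSum_inner_mul_inner f (Gτ τ f)
    refine hs.nonneg ?_
    intro i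
    rw [hcoef τ hτ f i, real_inner_comm f (b i)]
    nlinarith [hmu_pos τ i, sq_nonneg (inner ℝ f (b i) : ℝ), sq_nonneg (inner ℝ (b i) f : ℝ),
      real_inner_comm f (b i)]
  -- Part 4 : integral preservation
  have hint : ∀ g : Lp ℝ 2 ν, (inner ℝ (b 0) g : ℝ) = ∫ x, g x ∂ν := by
    intro g
    rw [L2.inner_def]
    refine integral_congr_ae ?_
    filter_upwards [hb0] with a ha
    simp [ha]
  have part4 : ∀ τ > (0 : ℝ), ∀ f : Lp ℝ 2 ν, ∫ x, (Gτ τ f) x ∂ν = ∫ x, f x ∂ν := by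
    intro τ hτ f
    rw [← hint, ← hint, hcoef τ hτ f 0, hmu0, one_mul]
  -- Part 5 : fixes constants
  have part5 : ∀ τ > (0 : ℝ), ∀ (c : ℝ) (f : Lp ℝ 2 ν), ⇑f =ᵐ[ν] (fun _ => c) → Gτ τ f = f := by
    intro τ hτ c f hf
    have hfe : f = c • b 0 := by
      refine Lp.ext ?_
      filter_upwards [hf, hb0, Lp.coeFn_smul c (b 0 : Lp ℝ 2 ν)] with a h1 h2 h3
      rw [h1, h3]
      simp [h2]
    rw [hfe, _root_.map_smul, hBj _ hτ 0, hmu0, one_smul]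
  -- Part 6 : ergodicity
  have part6 : ∀ τ > (0 : ℝ), ∀ f : Lp ℝ 2 ν, Gτ τ f = f → ∃ c : ℝ, ⇑f =ᵐ[ν] fun _ => c := by
    intro τ hτ f hf
    obtain ⟨cc, hcc⟩ : ∃ cc : ℝ, cc = (inner ℝ (b 0) f : ℝ) := ⟨_, rfl⟩
    refine ⟨cc, ?_⟩
    have hc : ∀ j, 1 ≤ j → (inner ℝ (b j) f : ℝ) = 0 := by
      intro j hj
      have h1 := hcoef τ hτ f j
      rw [hf] at h1
      have hμlt : mu τ j < 1 := by
        have hinv : 1 < (lam j)⁻¹ := (one_lt_inv₀ (hlampos j)).mpr (hlt j hj)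
        have : τ * (1 - (lam j)⁻¹) < 0 := mul_neg_of_pos_of_neg hτ (by linarith)
        simpa [hmu] using Real.exp_lt_one_iff.mpr this
      have h2 : (1 - mu τ j) * (inner ℝ (b j) f : ℝ) = 0 := by linear_combination h1
      rcases mul_eq_zero.mp h2 with h3 | h3
      · exfalso; linarith
      · exact h3
    have hfeq : f = cc • b 0 := by
      rw [hcc]
      apply b.repr.injective
      have hrs : b.repr ((inner ℝ (b 0) f : ℝ) • b 0) = (inner ℝ (b 0) f : ℝ) • lp.single 2 0 1 := by
        rw [_root_.map_smul]
        congr 1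
        exact b.repr_self 0
      rw [hrs]
      refine lp.ext (funext fun j => ?_)
      have hL : (↑(b.repr f) : ∀ _ : ℕ, ℝ) j = (inner ℝ (b j) f : ℝ) := b.repr_apply_apply f j
      have hR : (↑((inner ℝ (b 0) f : ℝ) • lp.single 2 0 1 : lp (fun _ : ℕ => ℝ) 2) : ∀ _ : ℕ, ℝ) j
          = (inner ℝ (b 0) f : ℝ) * (↑(lp.single 2 0 (1:ℝ) : lp (fun _ : ℕ => ℝ) 2) : ∀ _ : ℕ, ℝ) j := rfl
      rw [hL, hR]
      rcases Nat.eq_zero_or_pos j with rfl | hj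
      · simp [lp.single_apply]
      · rw [hc j hj]
        simp [lp.single_apply, (Nat.pos_iff_ne_zero.mp hj)]
    rw [hfeq]
    filter_upwards [Lp.coeFn_smul cc (b 0 : Lp ℝ 2 ν), hb0] with a h1 h2
    rw [h1, Pi.smul_apply, h2, smul_eq_mul, mul_one]
  -- Part 7 : strong continuity
  have part7 : ∀ f : Lp ℝ 2 ν, Tendsto (fun τ => Gτ τ f) (𝓝[>] (0 : ℝ)) (𝓝 f) := by
    intro f
    rw [Metric.tendsto_nhdsWithin_nhds]
    intro ε hε
    set c : ℕ → ℝ := fun j => (inner ℝ (b j) f : ℝ) with hcdef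
    have hsum : HasSum (fun j => c j ^ 2) (inner ℝ f f : ℝ) := by
      have h0 := b.hasSum_inner_mul_inner f f
      refine HasSum.congr_fun h0 ?_
      intro j
      simp only [hcdef, pow_two]
      rw [real_inner_comm f (b j)]
    have hsummable : Summable (fun j => c j ^ 2) := hsum.summable
    -- choose N for the tail
    have htail : Tendsto (fun N : ℕ => ∑' (j : {x : ℕ // x ∉ Finset.range N}), c j ^ 2)
        atTop (𝓝 0) := (tendsto_tsum_compl_atTop_zero (fun j => c j ^ 2)).comp
        tendsto_finset_range
    obtain ⟨N, hN⟩ := (htail.eventually (gt_mem_nhds (by positivity : (0:ℝ) < ε ^ 2 / 4))).exists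
    set M : ℝ := (lam N)⁻¹ + 1 with hMdef
    clear_value M
    have hMpos : 0 < M := by
      have := hinvge N
      simp only [hMdef]; linarith
    set δ : ℝ := min 1 (ε / (2 * M * (‖f‖ + 1))) with hδdef
    clear_value δ
    have hδpos : 0 < δ := by
      have h1 : (0:ℝ) < ε / (2 * M * (‖f‖ + 1)) := by positivity
      rw [hδdef]
      exact lt_min one_pos h1
    refine ⟨δ, hδpos, ?_⟩
    intro τ hτmem hτd
    have hτ : 0 < τ := hτmem
    have hτδ : τ < δ := by
      rw [Real.dist_eq, sub_zero, abs_of_pos hτ] at hτd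
      exact hτd
    -- coefficients of the difference
    have hdc : ∀ j, (↑(b.repr (Gτ τ f - f)) : ∀ _ : ℕ, ℝ) j = (mu τ j - 1) * c j := by
      intro j
      have h1 : (↑(b.repr (Gτ τ f - f)) : ∀ _ : ℕ, ℝ) j = (inner ℝ (b j) (Gτ τ f - f) : ℝ) :=
        b.repr_apply_apply _ j
      rw [h1, inner_sub_right, hcoef τ hτ f j]
      simp only [hcdef]
      ring
    -- norm formula
    have hnorm : ‖Gτ τ f - f‖ ^ 2 = ∑' j, ((mu τ j - 1) * c j) ^ 2 := by
      have h1 : ‖Gτ τ f - f‖ = ‖b.repr (Gτ τ f - f)‖ := (b.repr.norm_map _).symm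
      have h2 := lp.norm_rpow_eq_tsum (p := 2)
        (by norm_num : 0 < (2 : ENNReal).toReal) (b.repr (Gτ τ f - f))
      have h3 : ((2 : ENNReal)).toReal = (2 : ℝ) := by norm_num
      rw [h3] at h2
      have h4 : ‖b.repr (Gτ τ f - f)‖ ^ (2:ℝ) = ‖b.repr (Gτ τ f - f)‖ ^ (2:ℕ) := by
        rw [show ((2:ℝ)) = ((2:ℕ):ℝ) by norm_num, Real.rpow_natCast]
      rw [h1, ← h4, h2]
      congr 1
      funext j
      rw [hdc j, Real.norm_eq_abs, show ((2:ℝ)) = ((2:ℕ):ℝ) from by norm_num,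
        Real.rpow_natCast, sq_abs]
    -- summability of the terms
    have hterm_le : ∀ j, ((mu τ j - 1) * c j) ^ 2 ≤ c j ^ 2 := by
      intro j
      have h2 : (mu τ j - 1) ^ 2 ≤ 1 := by
        nlinarith [hmu_pos τ j, hmu_le_one τ hτ.le j]
      calc ((mu τ j - 1) * c j) ^ 2 = (mu τ j - 1) ^ 2 * c j ^ 2 := by ring
      _ ≤ 1 * c j ^ 2 := mul_le_mul_of_nonneg_right h2 (sq_nonneg _)
      _ = c j ^ 2 := one_mul _
    have hsummable2 : Summable (fun j => ((mu τ j - 1) * c j) ^ 2) :=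
      Summable.of_nonneg_of_le (fun j => sq_nonneg _) hterm_le hsummable
    -- split into head and tail
    have hsplit := Summable.sum_add_tsum_compl (s := Finset.range N) hsummable2
    -- head bound
    have hhead : ∀ j ∈ Finset.range N, ((mu τ j - 1) * c j) ^ 2 ≤ (τ * M) ^ 2 * c j ^ 2 := by
      intro j hj
      have hjN : j ≤ N := (Finset.mem_range.mp hj).le
      have hlamNj : lam N ≤ lam j := hanti hjN
      have hinvle : (lam j)⁻¹ ≤ (lam N)⁻¹ :=
        one_div_le_one_div_of_le (hlampos N) hlamNj |>.trans_eq (by rw [one_div]) |>.trans_eq'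
          (by rw [one_div])
      have hexp : 1 - mu τ j ≤ τ * M := by
        have h1 : τ * (1 - (lam j)⁻¹) + 1 ≤ mu τ j := by
          simpa [hmu] using Real.add_one_le_exp (τ * (1 - (lam j)⁻¹))
        have h2 : (lam j)⁻¹ - 1 ≤ M := by
          simp only [hMdef]; linarith
        nlinarith [mul_le_mul_of_nonneg_left h2 hτ.le]
      have hlow : -(τ * M) ≤ mu τ j - 1 := by
        have h1 := hmu_pos τ j
        have h2 : 0 ≤ τ * M := by positivity
        linarith [hexp]
      have habs : |mu τ j - 1| ≤ τ * M := abs_le.mpr ⟨hlow,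
        by linarith [hmu_le_one τ hτ.le j, mul_nonneg hτ.le hMpos.le]⟩
      have h2 : (mu τ j - 1) ^ 2 ≤ (τ * M) ^ 2 := by
        rw [← sq_abs (mu τ j - 1), ← sq_abs (τ * M)]
        refine pow_le_pow_left₀ (abs_nonneg _) ?_ 2
        rwa [abs_of_nonneg (by positivity : (0:ℝ) ≤ τ * M)]
      calc ((mu τ j - 1) * c j) ^ 2 = (mu τ j - 1) ^ 2 * c j ^ 2 := by ring
      _ ≤ (τ * M) ^ 2 * c j ^ 2 := mul_le_mul_of_nonneg_right h2 (sq_nonneg _)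
    have hheadsum : ∑ j ∈ Finset.range N, ((mu τ j - 1) * c j) ^ 2
        ≤ (τ * M) ^ 2 * ‖f‖ ^ 2 := by
      calc ∑ j ∈ Finset.range N, ((mu τ j - 1) * c j) ^ 2
          ≤ ∑ j ∈ Finset.range N, (τ * M) ^ 2 * c j ^ 2 := Finset.sum_le_sum hhead
      _ = (τ * M) ^ 2 * ∑ j ∈ Finset.range N, c j ^ 2 := by rw [Finset.mul_sum]
      _ ≤ (τ * M) ^ 2 * ‖f‖ ^ 2 := by
          refine mul_le_mul_of_nonneg_left ?_ (by positivity)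
          have h1 : ∑ j ∈ Finset.range N, c j ^ 2 ≤ (inner ℝ f f : ℝ) :=
            sum_le_hasSum _ (fun j _ => sq_nonneg _) hsum
          rwa [real_inner_self_eq_norm_sq] at h1
    -- tail bound
    have htailsum : ∑' (j : {x : ℕ // x ∉ Finset.range N}), ((mu τ (j:ℕ) - 1) * c (j:ℕ)) ^ 2
        ≤ ∑' (j : {x : ℕ // x ∉ Finset.range N}), c (j:ℕ) ^ 2 := by
      refine Summable.tsum_le_tsum (fun j => hterm_le (j:ℕ)) ?_ ?_
      · exact hsummable2.subtype _
      · exact hsummable.subtype _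
    -- put it together
    have hτM : τ * M * ‖f‖ < ε / 2 := by
      have hδ2 : δ ≤ ε / (2 * M * (‖f‖ + 1)) := by rw [hδdef]; exact min_le_right _ _
      have h1 : τ < ε / (2 * M * (‖f‖ + 1)) := lt_of_lt_of_le hτδ hδ2
      have h2 : 0 < 2 * M * (‖f‖ + 1) := by positivity
      have h3 : τ * (2 * M * (‖f‖ + 1)) < ε := by
        rw [← lt_div_iff₀ h2]
        exact h1
      have h4 : 0 ≤ ‖f‖ := norm_nonneg f
      nlinarith [mul_le_mul_of_nonneg_left (show ‖f‖ ≤ ‖f‖ + 1 by linarith)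
        (mul_nonneg hτ.le hMpos.le)]
    have hsplit' : ∑ j ∈ Finset.range N, ((mu τ j - 1) * c j) ^ 2
        + ∑' (j : {x : ℕ // x ∉ Finset.range N}), ((mu τ (j:ℕ) - 1) * c (j:ℕ)) ^ 2
        = ∑' (j : ℕ), ((mu τ j - 1) * c j) ^ 2 := hsplit
    have hfinal : ‖Gτ τ f - f‖ ^ 2 < ε ^ 2 := by
      rw [hnorm, ← hsplit']
      have h1 : (τ * M) ^ 2 * ‖f‖ ^ 2 < ε ^ 2 / 4 := by
        have h2 : 0 ≤ τ * M * ‖f‖ := by positivity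
        nlinarith [mul_lt_mul' hτM.le hτM h2 (by positivity : (0:ℝ) < ε / 2)]
      have h2 : ∑' (j : {x : ℕ // x ∉ Finset.range N}), ((mu τ (j:ℕ) - 1) * c (j:ℕ)) ^ 2
          < ε ^ 2 / 4 := lt_of_le_of_lt htailsum hN
      have h3 := hheadsum
      linarith [sq_nonneg ε]
    rw [dist_eq_norm]
    have h0 : 0 ≤ ε := hε.le
    exact lt_of_pow_lt_pow_left₀ 2 h0 hfinal
  exact ⟨part1, part2, part3, part4, part5, part6, part7⟩
end

section
/- Let U^t = e^{tV} be a unitary group on L²(μ) with skew-adjoint generator V, and suppose (iω_τ)_{τ>0} is a family converging to iω and (z_τ) a family of unit vectors such that for every ε > 0 and every t in some interval growing to all of ℝ as τ → 0⁺, ‖U^t z_τ − e^{iω_τ t} z_τ‖ < ε (i.e., (e^{iω_τ t}, z_τ) are ε-approximate eigenpairs of U^t on intervals of diverging length). Then iω lies in the spectrum of V. -/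
open Filter Topology

/-- Let `U^t = e^{tV}` be a strongly continuous unitary group on a Hilbert space with
skew-adjoint generator `V` (characterized by `V f = lim_{t→0} (U^t f − f)/t` on its
maximal domain).  Suppose `ω_τ → ω` and `z_τ` are unit vectors such that for every
`ε > 0`, `(e^{iω_τ t}, z_τ)` is an `ε`-approximate eigenpair of `U^t` for all `t` in
intervals `(−T(ε,τ), T(ε,τ))` whose lengths diverge as `τ → 0⁺`.  Then `iω` lies in the
spectrum of `V`: `iω − V` has no bounded two-sided inverse. -/
theorem stmt17 {H : Type*} [NormedAddCommGroup H] [InnerProductSpace ℂ H] [CompleteSpace H]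
    (U : ℝ → H →L[ℂ] H)
    (hU0 : U 0 = 1)
    (hUgrp : ∀ s t : ℝ, U (s + t) = (U s).comp (U t))
    (hUiso : ∀ t : ℝ, ∀ f : H, ‖U t f‖ = ‖f‖)
    (V : H →ₗ.[ℂ] H) (hdense : Dense (V.domain : Set H))
    (hVgen : ∀ f (hf : f ∈ V.domain),
      Tendsto (fun t : ℝ => (t : ℂ)⁻¹ • (U t f - f)) (𝓝[≠] 0) (𝓝 (V ⟨f, hf⟩)))
    (hVdom : ∀ f g : H,
      Tendsto (fun t : ℝ => (t : ℂ)⁻¹ • (U t f - f)) (𝓝[≠] 0) (𝓝 g) → f ∈ V.domain)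
    (ω : ℝ) (ωτ : ℝ → ℝ) (hω : Tendsto ωτ (𝓝[>] (0 : ℝ)) (𝓝 ω))
    (z : ℝ → H) (hz : ∀ τ > (0 : ℝ), ‖z τ‖ = 1)
    (happrox : ∀ ε > (0 : ℝ), ∃ T : ℝ → ℝ,
      Tendsto T (𝓝[>] (0 : ℝ)) atTop ∧
      ∀ τ > (0 : ℝ), ∀ t : ℝ, |t| < T τ →
        ‖U t (z τ) - Complex.exp (Complex.I * (ωτ τ * t)) • z τ‖ < ε) :
    ¬ ∃ R : H →L[ℂ] H,
      (∀ f : H, ∃ h : R f ∈ V.domain,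
        (Complex.I * ω) • R f - V ⟨R f, h⟩ = f) ∧
      (∀ f (hf : f ∈ V.domain), R ((Complex.I * ω) • f - V ⟨f, hf⟩) = f) := by
  rintro ⟨R, hR1, hR2⟩
  -- Step 1: strong continuity at 0 for domain vectors
  have hU0' : ∀ g : H, g ∈ V.domain → Tendsto (fun s : ℝ => U s g) (𝓝 (0 : ℝ)) (𝓝 g) := by
    intro g hg
    have hcoe : Tendsto (fun s : ℝ => (s : ℂ)) (𝓝[≠] (0 : ℝ)) (𝓝 0) := by
      simpa using (Complex.continuous_ofReal.tendsto 0).mono_left nhdsWithin_le_nhds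
    have h2 : Tendsto (fun s : ℝ => (s : ℂ) • ((s : ℂ)⁻¹ • (U s g - g))) (𝓝[≠] (0 : ℝ))
        (𝓝 ((0 : ℂ) • V ⟨g, hg⟩)) := hcoe.smul (hVgen g hg)
    rw [zero_smul] at h2
    have h3 : Tendsto (fun s : ℝ => U s g - g) (𝓝[≠] (0 : ℝ)) (𝓝 0) := by
      apply h2.congr'
      filter_upwards [eventually_mem_nhdsWithin] with s hs
      have hs0 : (s : ℂ) ≠ 0 := by
        simpa using (Set.mem_compl_singleton_iff.mp hs)
      rw [smul_inv_smul₀ hs0]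
    have h4 : Tendsto (fun s : ℝ => U s g) (𝓝[≠] (0 : ℝ)) (𝓝 g) := by
      have := h3.add_const g
      simpa using this
    rw [← nhdsNE_sup_pure (0 : ℝ), tendsto_sup]
    refine ⟨h4, ?_⟩
    have := tendsto_pure_nhds (fun s : ℝ => U s g) 0
    simpa [hU0] using this
  -- Step 2: strong continuity at 0 for all vectors
  have hUc0 : ∀ g : H, Tendsto (fun s : ℝ => U s g) (𝓝 (0 : ℝ)) (𝓝 g) := by
    intro g
    rw [Metric.tendsto_nhds]
    intro ε hε
    obtain ⟨g', hg'mem, hg'close⟩ := hdense.exists_dist_lt g (show (0:ℝ) < ε/3 by linarith)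
    obtain ⟨hg'd, hg'⟩ : ∃ h : g' ∈ V.domain, True := ⟨hg'mem, trivial⟩
    have h1 := hU0' g' hg'd
    rw [Metric.tendsto_nhds] at h1
    filter_upwards [h1 (ε/3) (by linarith)] with s hs
    have e1 : ‖U s (g - g')‖ = ‖g - g'‖ := hUiso s _
    have e2 : dist (U s g) g ≤ ‖U s (g - g')‖ + dist (U s g') g' + ‖g' - g‖ := by
      rw [dist_eq_norm, dist_eq_norm]
      have : U s g - g = U s (g - g') + (U s g' - g') + (g' - g) := by
        rw [map_sub]; abel
      rw [this]
      exact le_trans (norm_add_le _ _) (by gcongr; exact norm_add_le _ _)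
    have e3 : ‖g - g'‖ < ε/3 := by rwa [← dist_eq_norm]
    have e4 : ‖g' - g‖ < ε/3 := by rwa [norm_sub_rev]
    calc dist (U s g) g ≤ ‖U s (g - g')‖ + dist (U s g') g' + ‖g' - g‖ := e2
      _ < ε/3 + ε/3 + ε/3 := by rw [e1]; gcongr
      _ = ε := by ring
  -- Step 3: strong continuity everywhere
  have hUcont : ∀ g : H, Continuous fun s : ℝ => U s g := by
    intro g
    rw [continuous_iff_continuousAt]
    intro s₀
    have h1 : Tendsto (fun s : ℝ => s - s₀) (𝓝 s₀) (𝓝 0) := by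
      simpa using (tendsto_id (x := 𝓝 s₀)).sub_const s₀
    have h2 : Tendsto (fun s : ℝ => U s₀ (U (s - s₀) g)) (𝓝 s₀) (𝓝 (U s₀ g)) :=
      ((U s₀).continuous.tendsto g).comp ((hUc0 g).comp h1)
    refine h2.congr fun s => ?_
    rw [← ContinuousLinearMap.comp_apply, ← hUgrp]
    have : s₀ + (s - s₀) = s := by ring
    rw [this]
  -- Step 4: differentiability of the orbit for domain vectors
  have hderiv : ∀ (f : H) (hf : f ∈ V.domain) (s₀ : ℝ),
      HasDerivAt (fun s : ℝ => U s f) (U s₀ (V ⟨f, hf⟩)) s₀ := by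
    intro f hf s₀
    rw [hasDerivAt_iff_tendsto_slope]
    have h1 : Tendsto (fun s : ℝ => s - s₀) (𝓝[≠] s₀) (𝓝[≠] (0 : ℝ)) := by
      apply tendsto_nhdsWithin_of_tendsto_nhds_of_eventually_within
      · exact ((tendsto_id (x := 𝓝 s₀)).sub_const s₀).mono_left nhdsWithin_le_nhds |>.congr
          (fun s => rfl) |>.mono_right (by simp)
      · filter_upwards [eventually_mem_nhdsWithin] with s hs
        simpa [sub_eq_zero] using hs
    have h2 : Tendsto (fun s : ℝ => U s₀ (((s - s₀ : ℝ) : ℂ)⁻¹ • (U (s - s₀) f - f)))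
        (𝓝[≠] s₀) (𝓝 (U s₀ (V ⟨f, hf⟩))) :=
      ((U s₀).continuous.tendsto _).comp ((hVgen f hf).comp h1)
    apply h2.congr'
    filter_upwards [eventually_mem_nhdsWithin] with s _
    rw [slope_def_module]
    rw [map_smul, map_sub, ← ContinuousLinearMap.comp_apply, ← hUgrp]
    have : s₀ + (s - s₀) = s := by ring
    rw [this, ← Complex.coe_smul, Complex.ofReal_inv]
  -- Step 5: choose parameters
  set c : ℝ := ‖R‖ with hc
  have hcnn : (0 : ℝ) ≤ c := norm_nonneg R
  set t₀ : ℝ := 4 * c + 4 with ht₀def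
  have ht₀pos : (0 : ℝ) < t₀ := by positivity
  obtain ⟨T, hT, hTap⟩ := happrox (1/4) (by norm_num)
  have hev1 : ∀ᶠ τ in 𝓝[>] (0 : ℝ), t₀ < T τ := hT.eventually_gt_atTop t₀
  have hev2 : ∀ᶠ τ in 𝓝[>] (0 : ℝ), |ωτ τ - ω| < 1 / (8 * t₀) := by
    have h := hω
    rw [Metric.tendsto_nhds] at h
    have := h (1 / (8 * t₀)) (by positivity)
    simpa [Real.dist_eq] using this
  have hev3 : ∀ᶠ τ in 𝓝[>] (0 : ℝ), (0 : ℝ) < τ := by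
    filter_upwards [eventually_mem_nhdsWithin] with τ hτ
    exact hτ
  obtain ⟨τ, hTτ, hδ, hτpos⟩ := (hev1.and (hev2.and hev3)).exists
  set zτ : H := z τ with hzτdef
  have hzτ : ‖zτ‖ = 1 := hz τ hτpos
  obtain ⟨hfd, hfe⟩ := hR1 zτ
  set f : H := R zτ with hfdef
  have hVf : V ⟨f, hfd⟩ = (Complex.I * ω) • f - zτ := by
    rw [← hfe]; abel
  -- Step 6: the derivative computation
  set a : ℂ := -(Complex.I * ω) with ha
  set G : ℝ → H := fun s => Complex.exp (a * s) • U s f with hGdef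
  have hGderiv : ∀ s : ℝ, HasDerivAt G (-(Complex.exp (a * s) • U s zτ)) s := by
    intro s
    have he : HasDerivAt (fun s : ℝ => Complex.exp (a * (s : ℂ)))
        (Complex.exp (a * s) * (a * 1)) s :=
      (Complex.ofRealCLM.hasDerivAt.const_mul a).cexp
    have hsm := he.smul (hderiv f hfd s)
    have hval : Complex.exp (a * s) • U s (V ⟨f, hfd⟩) + (Complex.exp (a * s) * (a * 1)) • U s f
        = -(Complex.exp (a * s) • U s zτ) := by
      rw [hVf, map_sub, map_smul, ha, mul_one]
      module
    rw [hval] at hsm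
    exact hsm
  -- Step 7: FTC
  have hexpc : Continuous fun s : ℝ => Complex.exp (a * s) :=
    Complex.continuous_exp.comp (continuous_const.mul Complex.continuous_ofReal)
  have hcont : Continuous fun s : ℝ => -(Complex.exp (a * s) • U s zτ) :=
    (hexpc.smul (hUcont zτ)).neg
  have hFTC : ∫ s in (0:ℝ)..t₀, -(Complex.exp (a * s) • U s zτ) = G t₀ - G 0 :=
    intervalIntegral.integral_eq_sub_of_hasDerivAt (fun s _ => hGderiv s)
      (hcont.intervalIntegrable 0 t₀)
  -- Step 8: upper bound on ‖G t₀ - G 0‖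
  have hGnorm : ∀ s : ℝ, ‖G s‖ = ‖f‖ := by
    intro s
    rw [hGdef]
    simp only [norm_smul]
    rw [hUiso s f, Complex.norm_exp]
    have : (a * (s : ℂ)).re = 0 := by
      rw [ha]
      simp [Complex.mul_re]
    rw [this, Real.exp_zero, one_mul]
  have hfbound : ‖f‖ ≤ c := by
    calc ‖f‖ ≤ ‖R‖ * ‖zτ‖ := R.le_opNorm zτ
      _ = c := by rw [hzτ, mul_one]
  have hupper : ‖G t₀ - G 0‖ ≤ 2 * c :=
    calc ‖G t₀ - G 0‖ ≤ ‖G t₀‖ + ‖G 0‖ := norm_sub_le _ _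
      _ = ‖f‖ + ‖f‖ := by rw [hGnorm, hGnorm]
      _ ≤ 2 * c := by linarith
  -- Step 9: lower bound.  Set J := the integral; show ‖J + t₀ • zτ‖ ≤ t₀/2.
  set J : H := ∫ s in (0:ℝ)..t₀, -(Complex.exp (a * s) • U s zτ) with hJdef
  have hconst : (t₀ : ℝ) • zτ = ∫ s in (0:ℝ)..t₀, zτ := by
    rw [intervalIntegral.integral_const, sub_zero]
  have hsum : J + t₀ • zτ = ∫ s in (0:ℝ)..t₀, (zτ - Complex.exp (a * s) • U s zτ) := by
    rw [hJdef, hconst, ← intervalIntegral.integral_add]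
    · congr 1
      funext s
      abel
    · exact (hcont.intervalIntegrable 0 t₀)
    · exact (continuous_const.intervalIntegrable 0 t₀)
  have hptwise : ∀ s ∈ Set.uIoc (0:ℝ) t₀, ‖zτ - Complex.exp (a * s) • U s zτ‖ ≤ 1/2 := by
    intro s hs
    rw [Set.uIoc_of_le ht₀pos.le] at hs
    obtain ⟨hs0, hst⟩ := hs
    have habs : |s| = s := abs_of_pos hs0
    -- the approximate eigenvector estimate
    have happ : ‖U s zτ - Complex.exp (Complex.I * (ωτ τ * s)) • zτ‖ < 1/4 :=
      hTap τ hτpos s (by rw [habs]; linarith)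
    -- exponential phase identity
    have hphase : Complex.exp (a * s) * Complex.exp (Complex.I * (ωτ τ * s))
        = Complex.exp (Complex.I * ((ωτ τ - ω) * s)) := by
      rw [← Complex.exp_add]
      congr 1
      rw [ha]
      ring_nf
    have hterm2 : ‖Complex.exp (a * s) • U s zτ
        - Complex.exp (Complex.I * ((ωτ τ - ω) * s)) • zτ‖ < 1/4 := by
      rw [← hphase, mul_smul, ← smul_sub, norm_smul, Complex.norm_exp]
      have hre : (a * (s : ℂ)).re = 0 := by rw [ha]; simp [Complex.mul_re]
      rw [hre, Real.exp_zero, one_mul]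
      exact happ
    have hterm1 : ‖zτ - Complex.exp (Complex.I * ((ωτ τ - ω) * s)) • zτ‖ ≤ 1/4 := by
      have : zτ - Complex.exp (Complex.I * ((ωτ τ - ω) * s)) • zτ
          = ((1 : ℂ) - Complex.exp (Complex.I * ((ωτ τ - ω) * s))) • zτ := by
        rw [sub_smul, one_smul]
      rw [this, norm_smul, hzτ, mul_one]
      have hxabs : ‖Complex.I * ((ωτ τ - ω) * s)‖ = |ωτ τ - ω| * s := by
        rw [norm_mul, Complex.norm_I, one_mul, norm_mul, ← Complex.ofReal_sub,
          Complex.norm_real, Complex.norm_real, Real.norm_eq_abs, Real.norm_eq_abs, abs_of_pos hs0]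
      have hsmall : |ωτ τ - ω| * s ≤ 1/8 := by
        have h8 : |ωτ τ - ω| * s ≤ (1 / (8 * t₀)) * t₀ := by
          apply mul_le_mul hδ.le hst hs0.le (by positivity)
        have : (1 / (8 * t₀)) * t₀ = 1/8 := by field_simp [mul_comm]
        linarith
      have hle1 : ‖Complex.I * ((ωτ τ - ω) * s)‖ ≤ 1 := by
        rw [hxabs]; linarith
      have := Complex.norm_exp_sub_one_le hle1
      rw [hxabs] at this
      calc ‖1 - Complex.exp (Complex.I * ((ωτ τ - ω) * s))‖
          = ‖Complex.exp (Complex.I * ((ωτ τ - ω) * s)) - 1‖ := by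
            rw [← norm_neg]; rw [neg_sub]
        _ ≤ 2 * (|ωτ τ - ω| * s) := this
        _ ≤ 1/4 := by linarith
    calc ‖zτ - Complex.exp (a * s) • U s zτ‖
        ≤ ‖zτ - Complex.exp (Complex.I * ((ωτ τ - ω) * s)) • zτ‖
          + ‖Complex.exp (Complex.I * ((ωτ τ - ω) * s)) • zτ - Complex.exp (a * s) • U s zτ‖ := by
          have : zτ - Complex.exp (a * s) • U s zτ
              = (zτ - Complex.exp (Complex.I * ((ωτ τ - ω) * s)) • zτ)
                + (Complex.exp (Complex.I * ((ωτ τ - ω) * s)) • zτ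
                  - Complex.exp (a * s) • U s zτ) := by abel
          rw [this]
          exact norm_add_le _ _
      _ ≤ 1/4 + 1/4 := by
          rw [norm_sub_rev (Complex.exp (Complex.I * ((ωτ τ - ω) * s)) • zτ)]
          exact add_le_add hterm1 hterm2.le
      _ = 1/2 := by norm_num
  have hJbound : ‖J + t₀ • zτ‖ ≤ (1/2) * t₀ := by
    rw [hsum]
    have := intervalIntegral.norm_integral_le_of_norm_le_const hptwise
    simpa [abs_of_pos ht₀pos] using this
  -- Step 10: the contradiction
  have hJlower : t₀ - (1/2) * t₀ ≤ ‖J‖ := by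
    have h1 : ‖t₀ • zτ‖ = t₀ := by
      rw [norm_smul, hzτ, mul_one, Real.norm_eq_abs, abs_of_pos ht₀pos]
    have h2 : ‖t₀ • zτ‖ - ‖J + t₀ • zτ‖ ≤ ‖J‖ := by
      have : ((t₀ : ℝ) • zτ) - (J + t₀ • zτ) = -J := by abel
      have h3 := norm_sub_norm_le ((t₀ : ℝ) • zτ) (J + t₀ • zτ)
      rw [this, norm_neg] at h3
      exact h3
    linarith
  have hJupper : ‖J‖ ≤ 2 * c := by rw [hFTC]; exact hupper
  rw [ht₀def] at hJlower
  linarith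
end
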